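/- arXiv:1711.08555 — 3 statements merged into one kernel-verified Lean document; each statement's English description precedes it below -/
import Mathlib

section
/- Let m ≥ 2 and let k, r be integers with 1 ≤ k ≤ r. Then the number of paths of length t = 2k−1 in the perfect unrooted m-ary tree of diameter D = 2r−1 equals (m^(2k−2)/(m−1)) · ( 2·m^(r−k+1) − (m+1) ). -/
open SimpleGraph Finset

/-- `IsPerfectUnrootedMary m d H` says that `H` is the perfect unrooted `m`-ary tree of
diameter `d`: a tree in which every vertex has degree `1` or `m + 1`, whose maximum
distance between two vertices is `d`, and in which every degree-`1` vertex is at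
distance `d` from some other vertex.  (For `d = 0` the degree condition is dropped,
so that the one-vertex tree is the perfect tree of diameter `0`.) -/
def IsPerfectUnrootedMary (m d : ℕ) {W : Type} [Fintype W] (H : SimpleGraph W)
    [DecidableRel H.Adj] : Prop :=
  H.IsTree ∧
    (0 < d → ∀ v : W, H.degree v = 1 ∨ H.degree v = m + 1) ∧
    (∀ u v : W, H.dist u v ≤ d) ∧
    (∃ u v : W, H.dist u v = d) ∧
    (∀ v : W, H.degree v = 1 → ∃ u : W, H.dist u v = d)

/-- The number of paths of length `t` in `H`, i.e. the number of unordered pairs of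
vertices at distance exactly `t` from each other. -/
noncomputable def pathCount {W : Type} [Fintype W] [DecidableEq W] (H : SimpleGraph W) (t : ℕ) : ℕ :=
  (Finset.univ.filter fun p : Sym2 W => ∃ u v : W, p = s(u, v) ∧ H.dist u v = t).card

namespace UnrootedAux

variable {W : Type} {G : SimpleGraph W}

lemma path_length_eq (ht : G.IsTree) {u v : W} {p : G.Walk u v} (hp : p.IsPath) :
    p.length = G.dist u v := by
  obtain ⟨q, hq, hql⟩ := ht.isConnected.exists_path_of_dist u v
  obtain ⟨P, hP, hPuniq⟩ := ht.existsUnique_path u v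
  rw [hPuniq p hp, ← hPuniq q hq, hql]

lemma dist_getVert_le (ht : G.IsTree) {u v : W} (w : G.Walk u v) (i : ℕ) :
    G.dist u (w.getVert i) ≤ i := by
  induction i with
  | zero => simp [Walk.getVert_zero]
  | succ i ih =>
    by_cases hi : i < w.length
    · have hadj := w.adj_getVert_succ hi
      have h1 : G.dist (w.getVert i) (w.getVert (i+1)) = 1 :=
        (dist_eq_one_iff_adj).mpr hadj
      have := ht.isConnected.dist_triangle (u := u) (v := w.getVert i) (w := w.getVert (i+1))
      omega
    · rw [w.getVert_of_length_le (by omega)]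
      have h2 : G.dist u v ≤ w.length := dist_le w
      calc G.dist u v ≤ w.length := h2
        _ ≤ i + 1 := by omega

lemma tree_getVert_dist (ht : G.IsTree) {u v : W} {w : G.Walk u v}
    (hw : w.length = G.dist u v) {i : ℕ} (hi : i ≤ w.length) :
    G.dist u (w.getVert i) = i ∧ G.dist (w.getVert i) v = w.length - i := by
  have h1 : G.dist u (w.getVert i) ≤ i := dist_getVert_le ht w i
  have h2 : G.dist v (w.getVert i) ≤ w.length - i := by
    have := dist_getVert_le ht w.reverse (w.length - i)
    rwa [Walk.getVert_reverse, Nat.sub_sub_self hi] at this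
  have h3 : G.dist u v ≤ G.dist u (w.getVert i) + G.dist (w.getVert i) v :=
    ht.isConnected.dist_triangle
  rw [SimpleGraph.dist_comm] at h2
  omega

lemma tree_support_dist (ht : G.IsTree) {u v x : W} {w : G.Walk u v}
    (hw : w.length = G.dist u v) (hx : x ∈ w.support) :
    G.dist u x + G.dist x v = G.dist u v := by
  obtain ⟨i, hgv, hi⟩ := Walk.mem_support_iff_exists_getVert.mp hx
  obtain ⟨h1, h2⟩ := tree_getVert_dist ht hw hi
  rw [← hgv]
  omega

lemma tree_adj_dist (ht : G.IsTree) {a b : W} (hab : G.Adj a b) (x : W) :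
    G.dist x b = G.dist x a + 1 ∨ G.dist x a = G.dist x b + 1 := by
  obtain ⟨p, hp, hpl⟩ := ht.isConnected.exists_path_of_dist x a
  by_cases hb : b ∈ p.support
  · right
    have h1 := tree_support_dist ht hpl hb
    have h2 : G.dist b a = 1 := (dist_eq_one_iff_adj).mpr hab.symm
    omega
  · left
    have hq : (p.concat hab).IsPath := by
      rw [Walk.isPath_def, Walk.support_concat]
      exact List.Nodup.append (Walk.isPath_def _ |>.mp hp) (List.nodup_singleton b)
        (by simpa using hb)
    have := path_length_eq ht hq
    rw [Walk.length_concat, hpl] at this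
    omega

lemma tree_exists_closer (ht : G.IsTree) {u z : W} {s : ℕ} (h : G.dist u z = s + 1) :
    ∃ x, G.Adj z x ∧ G.dist u x = s := by
  obtain ⟨w, hw⟩ := exists_walk_of_dist_ne_zero (by omega : G.dist u z ≠ 0)
  refine ⟨w.getVert s, ?_, ?_⟩
  · have hadj := w.adj_getVert_succ (by omega : s < w.length)
    have : w.getVert (s+1) = z := by
      have : s + 1 = w.length := by omega
      rw [this, Walk.getVert_length]
    rw [this] at hadj
    exact hadj.symm
  · exact (tree_getVert_dist ht hw (by omega)).1

lemma tree_unique_closer (ht : G.IsTree) {z x y u : W} (hx : G.Adj z x) (hy : G.Adj z y)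
    (hdx : G.dist u x + 1 = G.dist u z) (hdy : G.dist u y + 1 = G.dist u z) : x = y := by
  obtain ⟨p, hp, hpl⟩ := ht.isConnected.exists_path_of_dist u x
  obtain ⟨q, hq, hql⟩ := ht.isConnected.exists_path_of_dist u y
  have hzp : z ∉ p.support := by
    intro hz
    have h1 := tree_support_dist ht hpl hz
    have h2 : G.dist z x = 1 := (dist_eq_one_iff_adj).mpr hx
    omega
  have hzq : z ∉ q.support := by
    intro hz
    have h1 := tree_support_dist ht hql hz
    have h2 : G.dist z y = 1 := (dist_eq_one_iff_adj).mpr hy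
    omega
  have hw1 : (Walk.cons hx p.reverse).IsPath :=
    hp.reverse.cons (by rwa [Walk.support_reverse, List.mem_reverse])
  have hw2 : (Walk.cons hy q.reverse).IsPath :=
    hq.reverse.cons (by rwa [Walk.support_reverse, List.mem_reverse])
  obtain ⟨P, hP, hPuniq⟩ := ht.existsUnique_path z u
  have he : Walk.cons hx p.reverse = Walk.cons hy q.reverse := by
    rw [hPuniq _ hw1, hPuniq _ hw2]
  have := congrArg (fun w => Walk.getVert w 1) he
  simpa [Walk.getVert_cons (n := 1) _ _ one_ne_zero] using this

lemma tree_cross (ht : G.IsTree) {a b u v : W} (hab : G.Adj a b)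
    (hu : G.dist u b = G.dist u a + 1) (hv : G.dist v a = G.dist v b + 1) :
    G.dist u v = G.dist u a + 1 + G.dist b v := by
  obtain ⟨p, hp, hpl⟩ := ht.isConnected.exists_path_of_dist u a
  obtain ⟨q, hq, hql⟩ := ht.isConnected.exists_path_of_dist b v
  have claim1 : ∀ x ∈ p.support, G.dist x b = G.dist x a + 1 := by
    intro x hx
    rcases tree_adj_dist ht hab x with h | h
    · exact h
    · exfalso
      have h1 := tree_support_dist ht hpl hx
      have h2 : G.dist u b ≤ G.dist u x + G.dist x b := ht.isConnected.dist_triangle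
      omega
  have claim2 : ∀ x ∈ q.support, G.dist x a = G.dist x b + 1 := by
    intro x hx
    rcases tree_adj_dist ht hab x with h | h
    · exfalso
      have h1 := tree_support_dist ht hql hx
      have h2 : G.dist v a ≤ G.dist v x + G.dist x a := ht.isConnected.dist_triangle
      have h3 : G.dist v x = G.dist x v := SimpleGraph.dist_comm ..
      have h4 : G.dist x b = G.dist b x := SimpleGraph.dist_comm ..
      have h5 : G.dist v b = G.dist b v := SimpleGraph.dist_comm ..
      omega
    · exact h
  have haq : a ∉ q.support := by
    intro h
    have := claim2 a h
    simp [SimpleGraph.dist_self] at this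
  have hcons : (Walk.cons hab q).IsPath := hq.cons haq
  have hw : (p.append (Walk.cons hab q)).IsPath := by
    rw [Walk.isPath_def, Walk.support_append]
    have htail : (Walk.cons hab q).support.tail = q.support := by
      simp [Walk.support_cons]
    rw [htail]
    refine List.Nodup.append (Walk.isPath_def _ |>.mp hp) (Walk.isPath_def _ |>.mp hq) ?_
    intro x hxp hxq
    have h1 := claim1 x hxp
    have h2 := claim2 x hxq
    omega
  have hlen := path_length_eq ht hw
  rw [Walk.length_append, Walk.length_cons, hpl, hql] at hlen
  omega

lemma tree_between_unique (ht : G.IsTree) :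
    ∀ (s : ℕ) {L : ℕ} {u v x y : W}, G.dist u v = L →
      G.dist u x = s → G.dist x v + s = L →
      G.dist u y = s → G.dist y v + s = L → x = y := by
  intro s
  induction s with
  | zero =>
    intro L u v x y _ hux _ huy _
    have hx := (ht.isConnected.dist_eq_zero_iff).mp hux
    have hy := (ht.isConnected.dist_eq_zero_iff).mp huy
    rw [← hx, ← hy]
  | succ s ih =>
    intro L u v x y huv hux hxv huy hyv
    obtain ⟨px, hpx_adj, hpx⟩ := tree_exists_closer ht hux
    obtain ⟨py, hpy_adj, hpy⟩ := tree_exists_closer ht huy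
    have hpxv : G.dist px v + s = L := by
      have h1 : G.dist px v ≤ G.dist px x + G.dist x v := ht.isConnected.dist_triangle
      have h2 : G.dist px x = 1 := (dist_eq_one_iff_adj).mpr hpx_adj.symm
      have h3 : G.dist u v ≤ G.dist u px + G.dist px v := ht.isConnected.dist_triangle
      omega
    have hpyv : G.dist py v + s = L := by
      have h1 : G.dist py v ≤ G.dist py y + G.dist y v := ht.isConnected.dist_triangle
      have h2 : G.dist py y = 1 := (dist_eq_one_iff_adj).mpr hpy_adj.symm
      have h3 : G.dist u v ≤ G.dist u py + G.dist py v := ht.isConnected.dist_triangle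
      omega
    have hz : px = py := ih huv hpx hpxv hpy hpyv
    subst hz
    refine tree_unique_closer ht (u := v) hpx_adj.symm hpy_adj.symm ?_ ?_
    · have e1 : G.dist v x = G.dist x v := SimpleGraph.dist_comm ..
      have e2 : G.dist v px = G.dist px v := SimpleGraph.dist_comm ..
      omega
    · have e1 : G.dist v y = G.dist y v := SimpleGraph.dist_comm ..
      have e2 : G.dist v px = G.dist px v := SimpleGraph.dist_comm ..
      omega

section Fin

variable [Fintype W] [DecidableEq W]

/-- vertices at distance `s` from `a`, on the side of `a` w.r.t. the edge `(a,b)`. -/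
noncomputable def sideSph (G : SimpleGraph W) (a b : W) (s : ℕ) : Finset W :=
  univ.filter fun x => G.dist x a = s ∧ G.dist x b = s + 1

/-- depth: distance to the nearer of the two centers -/
noncomputable def dp (G : SimpleGraph W) (c1 c2 x : W) : ℕ :=
  min (G.dist x c1) (G.dist x c2)

lemma dp_comm (c1 c2 x : W) : dp G c2 c1 x = dp G c1 c2 x := min_comm _ _

lemma dp_cases (ht : G.IsTree) {c1 c2 : W} (hcc : G.Adj c1 c2) (x : W) :
    (G.dist x c1 = dp G c1 c2 x ∧ G.dist x c2 = dp G c1 c2 x + 1) ∨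
      (G.dist x c2 = dp G c1 c2 x ∧ G.dist x c1 = dp G c1 c2 x + 1) := by
  rcases tree_adj_dist ht hcc x with h | h
  · left
    have : dp G c1 c2 x = G.dist x c1 := min_eq_left (by omega)
    omega
  · right
    have : dp G c1 c2 x = G.dist x c2 := min_eq_right (by omega)
    omega

lemma dp_adj (ht : G.IsTree) {c1 c2 a b : W} (hab : G.Adj a b) :
    dp G c1 c2 b ≤ dp G c1 c2 a + 1 := by
  have e : G.dist a b = 1 := (dist_eq_one_iff_adj).mpr hab
  have t1 : G.dist b c1 ≤ G.dist b a + G.dist a c1 := ht.isConnected.dist_triangle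
  have t2 : G.dist b c2 ≤ G.dist b a + G.dist a c2 := ht.isConnected.dist_triangle
  have e2 : G.dist b a = 1 := by rw [SimpleGraph.dist_comm]; exact e
  have m1 : dp G c1 c2 b ≤ G.dist b c1 := min_le_left _ _
  have m2 : dp G c1 c2 b ≤ G.dist b c2 := min_le_right _ _
  rcases le_total (G.dist a c1) (G.dist a c2) with h | h
  · have : dp G c1 c2 a = G.dist a c1 := min_eq_left h
    omega
  · have : dp G c1 c2 a = G.dist a c2 := min_eq_right h
    omega

lemma sideSph_rec (ht : G.IsTree) {a b : W} (hab : G.Adj a b) (s : ℕ)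
    [DecidableRel G.Adj] :
    sideSph G a b (s + 1) = ((G.neighborFinset a).erase b).biUnion
      (fun c => sideSph G c a s) := by
  ext x
  simp only [sideSph, mem_filter, mem_univ, true_and, mem_biUnion, mem_erase,
    mem_neighborFinset]
  constructor
  · rintro ⟨hxa, hxb⟩
    obtain ⟨c, hac, hxc⟩ := tree_exists_closer ht hxa
    refine ⟨c, ⟨?_, hac⟩, hxc, hxa⟩
    rintro rfl
    omega
  · rintro ⟨c, ⟨hcb, hac⟩, hxc, hxa⟩
    refine ⟨hxa, ?_⟩
    rcases tree_adj_dist ht hab x with h | h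
    · omega
    · exfalso
      exact hcb (tree_unique_closer ht hac hab (u := x) (by omega) (by omega))

lemma lemA {m R : ℕ} {c1 c2 : W} [DecidableRel G.Adj] (ht : G.IsTree)
    (hdeg : ∀ v, G.degree v = 1 ∨ G.degree v = m + 1)
    (hleafdep : ∀ x, G.degree x = 1 → dp G c1 c2 x = R) :
    ∀ (s : ℕ) (a b : W), G.Adj a b → dp G c1 c2 a + s ≤ R →
      (sideSph G a b s).card = m ^ s := by
  intro s
  induction s with
  | zero =>
    intro a b hab _
    have : sideSph G a b 0 = {a} := by
      ext x
      simp only [sideSph, mem_filter, mem_univ, true_and, mem_singleton]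
      constructor
      · rintro ⟨h0, _⟩
        exact (ht.isConnected.dist_eq_zero_iff).mp h0
      · rintro rfl
        refine ⟨SimpleGraph.dist_self, by rw [zero_add]; exact (dist_eq_one_iff_adj).mpr hab⟩
    rw [this, card_singleton, pow_zero]
  | succ s ih =>
    intro a b hab hdp
    have hdega : G.degree a = m + 1 := by
      rcases hdeg a with h | h
      · have := hleafdep a h
        omega
      · exact h
    rw [sideSph_rec ht hab s]
    rw [card_biUnion]
    · have hsum : ∀ c ∈ (G.neighborFinset a).erase b,
          (sideSph G c a s).card = m ^ s := by
        intro c hc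
        have hac : G.Adj a c := by
          have := mem_of_mem_erase hc
          exact (mem_neighborFinset _ _ _).mp this
        exact ih c a hac.symm (by
          have := dp_adj (c1 := c1) (c2 := c2) ht hac
          omega)
      rw [sum_congr rfl hsum, sum_const, smul_eq_mul]
      have hb : b ∈ G.neighborFinset a := (mem_neighborFinset _ _ _).mpr hab
      rw [card_erase_of_mem hb, card_neighborFinset_eq_degree, hdega]
      simp [pow_succ]
      ring
    · intro c hc c' hc' hne
      rw [Function.onFun, Finset.disjoint_left]
      intro x hx hx'
      simp only [sideSph, mem_filter, mem_univ, true_and] at hx hx'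
      have hac : G.Adj a c := (mem_neighborFinset _ _ _).mp (mem_of_mem_erase hc)
      have hac' : G.Adj a c' := (mem_neighborFinset _ _ _).mp (mem_of_mem_erase hc')
      exact hne (tree_unique_closer ht hac hac' (u := x) (by omega) (by omega))

lemma lemB {R : ℕ} {c1 c2 : W} (ht : G.IsTree) (hcc : G.Adj c1 c2)
    (hdepR : ∀ x, dp G c1 c2 x ≤ R) {a b : W} (hab : G.Adj a b)
    (hd : dp G c1 c2 b + 1 = dp G c1 c2 a) {s : ℕ} (hs : R < dp G c1 c2 a + s) :
    sideSph G a b s = ∅ := by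
  -- identify the nearer center `cA` to b, with distances:
  -- dist b cA = δ, dist b cB = δ+1, dist a cA = δ+1, dist a cB = δ+2
  set δ := dp G c1 c2 b with hδ
  have main : ∀ cA cB : W, G.Adj cA cB →
      G.dist b cA = δ → G.dist b cB = δ + 1 →
      (∀ y, min (G.dist y cA) (G.dist y cB) ≤ R) →
      min (G.dist a cA) (G.dist a cB) = δ + 1 →
      sideSph G a b s = ∅ := by
    intro cA cB hAB hbA hbB hRm hmina
    have haA : G.dist a cA = δ + 1 := by
      rcases tree_adj_dist ht hab cA with h | h
      · -- dist cA b = dist cA a + 1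
        have e1 : G.dist cA b = G.dist b cA := SimpleGraph.dist_comm ..
        have e2 : G.dist cA a = G.dist a cA := SimpleGraph.dist_comm ..
        have : min (G.dist a cA) (G.dist a cB) ≤ G.dist a cA := min_le_left _ _
        omega
      · have e1 : G.dist cA b = G.dist b cA := SimpleGraph.dist_comm ..
        have e2 : G.dist cA a = G.dist a cA := SimpleGraph.dist_comm ..
        omega
    have haB : G.dist a cB = δ + 2 := by
      rcases tree_adj_dist ht hab cB with h | h
      · have e1 : G.dist cB b = G.dist b cB := SimpleGraph.dist_comm ..
        have e2 : G.dist cB a = G.dist a cB := SimpleGraph.dist_comm ..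
        have : min (G.dist a cA) (G.dist a cB) ≤ G.dist a cB := min_le_right _ _
        omega
      · have e1 : G.dist cB b = G.dist b cB := SimpleGraph.dist_comm ..
        have e2 : G.dist cB a = G.dist a cB := SimpleGraph.dist_comm ..
        omega
    ext x
    simp only [sideSph, mem_filter, mem_univ, true_and, Finset.notMem_empty, iff_false]
    rintro ⟨hxa, hxb⟩
    have hxA : G.dist x cA = s + 1 + δ := by
      have := tree_cross ht hab (u := x) (v := cA)
        (by omega)
        (by
          have e1 : G.dist cA a = G.dist a cA := SimpleGraph.dist_comm ..
          have e2 : G.dist cA b = G.dist b cA := SimpleGraph.dist_comm ..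
          omega)
      have e3 : G.dist b cA = G.dist cA b := SimpleGraph.dist_comm ..
      omega
    have hxB : G.dist x cB = s + 1 + δ + 1 := by
      have := tree_cross ht hab (u := x) (v := cB)
        (by omega)
        (by
          have e1 : G.dist cB a = G.dist a cB := SimpleGraph.dist_comm ..
          have e2 : G.dist cB b = G.dist b cB := SimpleGraph.dist_comm ..
          omega)
      have e3 : G.dist b cB = G.dist cB b := SimpleGraph.dist_comm ..
      omega
    have := hRm x
    have : min (G.dist x cA) (G.dist x cB) = s + 1 + δ := by
      rw [hxA, hxB]; exact min_eq_left (by omega)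
    omega
  rcases dp_cases ht hcc b with ⟨h1, h2⟩ | ⟨h1, h2⟩
  · exact main c1 c2 hcc h1 h2 (fun y => hdepR y) (by
      have : dp G c1 c2 a = min (G.dist a c1) (G.dist a c2) := rfl
      omega)
  · exact main c2 c1 hcc.symm h1 h2
      (fun y => by rw [min_comm]; exact hdepR y)
      (by
        have : dp G c1 c2 a = min (G.dist a c1) (G.dist a c2) := rfl
        rw [min_comm]
        omega)

lemma dp_self_left (hcc : G.Adj c1 c2) : dp G c1 c2 c1 = 0 := by
  simp [dp, SimpleGraph.dist_self]

lemma dp_self_right (hcc : G.Adj c1 c2) : dp G c1 c2 c2 = 0 := by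
  simp [dp, SimpleGraph.dist_self]

lemma central_cross (ht : G.IsTree) {c1 c2 x y : W} (hcc : G.Adj c1 c2)
    (hxy : G.Adj x y) (hx : G.dist x c2 = G.dist x c1 + 1)
    (hy : G.dist y c1 = G.dist y c2 + 1) : x = c1 ∧ y = c2 := by
  have hc := tree_cross ht hcc (u := x) (v := y) hx hy
  have e1 : G.dist x y = 1 := (dist_eq_one_iff_adj).mpr hxy
  have e2 : G.dist x c1 = 0 := by omega
  have e3 : G.dist c2 y = 0 := by omega
  exact ⟨ht.isConnected.dist_eq_zero_iff.mp e2,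
    (ht.isConnected.dist_eq_zero_iff.mp e3).symm⟩

lemma classify (ht : G.IsTree) {c1 c2 a b : W} (hcc : G.Adj c1 c2) (hab : G.Adj a b) :
    (a = c1 ∧ b = c2) ∨ (a = c2 ∧ b = c1) ∨
      dp G c1 c2 a = dp G c1 c2 b + 1 ∨ dp G c1 c2 b = dp G c1 c2 a + 1 := by
  have d1 := dp_adj (c1 := c1) (c2 := c2) ht hab
  have d2 := dp_adj (c1 := c1) (c2 := c2) ht hab.symm
  by_cases h : dp G c1 c2 a = dp G c1 c2 b
  · rcases dp_cases ht hcc a with ⟨ha1, ha2⟩ | ⟨ha1, ha2⟩ <;>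
      rcases dp_cases ht hcc b with ⟨hb1, hb2⟩ | ⟨hb1, hb2⟩
    · exfalso
      rcases tree_adj_dist ht hab c1 with hh | hh <;>
        · have e1 : G.dist c1 b = G.dist b c1 := SimpleGraph.dist_comm ..
          have e2 : G.dist c1 a = G.dist a c1 := SimpleGraph.dist_comm ..
          omega
    · exact Or.inl (central_cross ht hcc hab (by omega) (by omega))
    · exact Or.inr (Or.inl (central_cross ht hcc.symm hab (by omega) (by omega)))
    · exfalso
      rcases tree_adj_dist ht hab c2 with hh | hh <;>
        · have e1 : G.dist c2 b = G.dist b c2 := SimpleGraph.dist_comm ..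
          have e2 : G.dist c2 a = G.dist a c2 := SimpleGraph.dist_comm ..
          omega
  · right; right; omega

lemma parent_aux (ht : G.IsTree) {cA cB x : W} {j : ℕ}
    (hA : G.dist x cA = j + 1) (hB : G.dist x cB = j + 2) :
    (∃ b, G.Adj x b ∧ dp G cA cB b = j) ∧
      (∀ b b', G.Adj x b → dp G cA cB b = j → G.Adj x b' → dp G cA cB b' = j → b = b') := by
  constructor
  · obtain ⟨b, hxb, hbA⟩ := tree_exists_closer ht (u := cA) (z := x)
      (by rw [SimpleGraph.dist_comm]; exact hA)
    refine ⟨b, hxb, ?_⟩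
    have e1 : G.dist cA b = G.dist b cA := SimpleGraph.dist_comm ..
    have t1 : G.dist x cB ≤ G.dist x b + G.dist b cB := ht.isConnected.dist_triangle
    have e2 : G.dist x b = 1 := (dist_eq_one_iff_adj).mpr hxb
    have m1 : dp G cA cB b ≤ G.dist b cA := min_le_left _ _
    have m2 : dp G cA cB b ≤ G.dist b cB := min_le_right _ _
    have hmin : dp G cA cB b = min (G.dist b cA) (G.dist b cB) := rfl
    have : G.dist b cA = j := by omega
    rw [hmin, this, min_eq_left (by omega)]
  · intro b b' hxb hb hxb' hb'
    have key : ∀ c, G.Adj x c → dp G cA cB c = j → G.dist c cA = j := by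
      intro c hxc hc
      have p1 := tree_adj_dist ht hxc cA
      have p2 := tree_adj_dist ht hxc cB
      have e1 : G.dist cA c = G.dist c cA := SimpleGraph.dist_comm ..
      have e2 : G.dist cA x = G.dist x cA := SimpleGraph.dist_comm ..
      have e3 : G.dist cB c = G.dist c cB := SimpleGraph.dist_comm ..
      have e4 : G.dist cB x = G.dist x cB := SimpleGraph.dist_comm ..
      have m1 : dp G cA cB c ≤ G.dist c cA := min_le_left _ _
      have m2 : dp G cA cB c ≤ G.dist c cB := min_le_right _ _
      have hmin : dp G cA cB c = min (G.dist c cA) (G.dist c cB) := rfl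
      have hor : dp G cA cB c = G.dist c cA ∨ dp G cA cB c = G.dist c cB := by
        rw [hmin]
        rcases le_total (G.dist c cA) (G.dist c cB) with hle | hle
        · exact Or.inl (min_eq_left hle)
        · exact Or.inr (min_eq_right hle)
      rcases p1 with q1 | q1 <;> rcases p2 with q2 | q2 <;> omega
    have k1 := key b hxb hb
    have k2 := key b' hxb' hb'
    refine tree_unique_closer ht (u := cA) hxb hxb' ?_ ?_
    · have e1 : G.dist cA b = G.dist b cA := SimpleGraph.dist_comm ..
      have e2 : G.dist cA x = G.dist x cA := SimpleGraph.dist_comm ..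
      omega
    · have e1 : G.dist cA b' = G.dist b' cA := SimpleGraph.dist_comm ..
      have e2 : G.dist cA x = G.dist x cA := SimpleGraph.dist_comm ..
      omega

lemma parent (ht : G.IsTree) {c1 c2 x : W} (hcc : G.Adj c1 c2) {j : ℕ}
    (hx : dp G c1 c2 x = j + 1) :
    (∃ b, G.Adj x b ∧ dp G c1 c2 b = j) ∧
      (∀ b b', G.Adj x b → dp G c1 c2 b = j → G.Adj x b' → dp G c1 c2 b' = j → b = b') := by
  rcases dp_cases ht hcc x with ⟨h1, h2⟩ | ⟨h1, h2⟩
  · exact parent_aux ht (by omega) (by omega)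
  · have := parent_aux ht (cA := c2) (cB := c1) (x := x) (j := j) (by omega) (by omega)
    constructor
    · obtain ⟨b, hb1, hb2⟩ := this.1
      exact ⟨b, hb1, by rwa [dp_comm] at hb2⟩
    · intro b b' u1 u2 u3 u4
      exact this.2 b b' u1 (by rwa [dp_comm]) u3 (by rwa [dp_comm])

lemma exists_centers (ht : G.IsTree) {R : ℕ}
    (hle : ∀ u v : W, G.dist u v ≤ 2 * R + 1)
    (hex : ∃ u v : W, G.dist u v = 2 * R + 1) :
    ∃ c1 c2 : W, G.Adj c1 c2 ∧ (∀ x, dp G c1 c2 x ≤ R) ∧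
      (∀ x u, G.dist u x = 2 * R + 1 → dp G c1 c2 x = R) := by
  obtain ⟨u0, v0, hd⟩ := hex
  obtain ⟨w, hw⟩ := ht.isConnected.exists_walk_length_eq_dist u0 v0
  have hlen : w.length = 2 * R + 1 := by rw [hw, hd]
  set c1 := w.getVert R with hc1
  set c2 := w.getVert (R + 1) with hc2
  have hadj : G.Adj c1 c2 := w.adj_getVert_succ (by omega)
  have h1 := tree_getVert_dist ht hw (i := R) (by omega)
  have h2 := tree_getVert_dist ht hw (i := R + 1) (by omega)
  rw [hlen, ← hc1] at h1
  rw [hlen, ← hc2] at h2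
  have du1 : G.dist u0 c1 = R := h1.1
  have d1v : G.dist c1 v0 = R + 1 := by have := h1.2; omega
  have du2 : G.dist u0 c2 = R + 1 := h2.1
  have d2v : G.dist c2 v0 = R := by have := h2.2; omega
  have hF1 : ∀ x, dp G c1 c2 x ≤ R := by
    intro x
    rcases dp_cases ht hadj x with ⟨hx1, hx2⟩ | ⟨hx1, hx2⟩
    · have hcr := tree_cross ht hadj (u := x) (v := v0) (by omega)
        (by
          have e1 : G.dist v0 c1 = G.dist c1 v0 := SimpleGraph.dist_comm ..
          have e2 : G.dist v0 c2 = G.dist c2 v0 := SimpleGraph.dist_comm ..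
          omega)
      have := hle x v0
      omega
    · have hcr := tree_cross ht hadj.symm (u := x) (v := u0) (by omega)
        (by
          have e1 : G.dist u0 c1 = G.dist c1 u0 := SimpleGraph.dist_comm ..
          have e2 : G.dist u0 c2 = G.dist c2 u0 := SimpleGraph.dist_comm ..
          omega)
      have := hle x u0
      have e3 : G.dist c1 u0 = G.dist u0 c1 := SimpleGraph.dist_comm ..
      omega
  refine ⟨c1, c2, hadj, hF1, ?_⟩
  intro x u hux
  have hdx := hF1 x
  have hdu := hF1 u
  rcases dp_cases ht hadj x with ⟨hx1, hx2⟩ | ⟨hx1, hx2⟩ <;>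
    rcases dp_cases ht hadj u with ⟨hu1, hu2⟩ | ⟨hu1, hu2⟩
  · -- both on side c1
    exfalso
    have t : G.dist u x ≤ G.dist u c1 + G.dist c1 x := ht.isConnected.dist_triangle
    have e : G.dist c1 x = G.dist x c1 := SimpleGraph.dist_comm ..
    omega
  · -- x side c1, u side c2 : cross edge (c2, c1) with u on c2 side
    have hcr := tree_cross ht hadj.symm (u := u) (v := x) (by omega) (by omega)
    have e : G.dist c1 x = G.dist x c1 := SimpleGraph.dist_comm ..
    omega
  · -- x side c2, u side c1
    have hcr := tree_cross ht hadj (u := u) (v := x) (by omega) (by omega)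
    have e : G.dist c2 x = G.dist x c2 := SimpleGraph.dist_comm ..
    omega
  · exfalso
    have t : G.dist u x ≤ G.dist u c2 + G.dist c2 x := ht.isConnected.dist_triangle
    have e : G.dist c2 x = G.dist x c2 := SimpleGraph.dist_comm ..
    omega

/-- double counting : ordered pairs at distance t, t ≠ 0 -/
lemma two_mul_pathCount {t : ℕ} (htne : t ≠ 0) :
    (univ.filter fun uv : W × W => G.dist uv.1 uv.2 = t).card = 2 * pathCount G t := by
  classical
  set OP := univ.filter fun uv : W × W => G.dist uv.1 uv.2 = t with hOP
  set P := univ.filter (fun p : Sym2 W => ∃ u v : W, p = s(u, v) ∧ G.dist u v = t) with hP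
  have hmap : ∀ uv ∈ OP, Sym2.mk uv.1 uv.2 ∈ P := by
    rintro ⟨u, v⟩ huv
    simp only [hOP, mem_filter, mem_univ, true_and] at huv
    simp only [hP, mem_filter, mem_univ, true_and]
    exact ⟨u, v, rfl, huv⟩
  rw [card_eq_sum_card_fiberwise hmap]
  have hfib : ∀ p ∈ P, (OP.filter fun uv => Sym2.mk uv.1 uv.2 = p).card = 2 := by
    intro p hp
    simp only [hP, mem_filter, mem_univ, true_and] at hp
    obtain ⟨u, v, rfl, hd⟩ := hp
    have hne : u ≠ v := by
      rintro rfl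
      rw [SimpleGraph.dist_self] at hd
      omega
    have : (OP.filter fun uv => Sym2.mk uv.1 uv.2 = s(u, v)) = {(u, v), (v, u)} := by
      ext ⟨x, y⟩
      simp only [hOP, mem_filter, mem_univ, true_and, mem_insert, mem_singleton,
        Prod.mk.injEq, Sym2.eq, Sym2.rel_iff', Prod.swap_prod_mk]
      constructor
      · rintro ⟨hdxy, h | h⟩
        · exact Or.inl ⟨h.1, h.2⟩
        · exact Or.inr ⟨h.1, h.2⟩
      · rintro (⟨rfl, rfl⟩ | ⟨rfl, rfl⟩)
        · exact ⟨hd, Or.inl ⟨rfl, rfl⟩⟩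
        · refine ⟨by rwa [SimpleGraph.dist_comm], Or.inr ⟨rfl, rfl⟩⟩
    rw [this, card_insert_of_notMem (by simp [hne]), card_singleton]
  rw [sum_congr rfl hfib, sum_const, smul_eq_mul, mul_comm]
  rfl

lemma ordered_decomp (ht : G.IsTree) [DecidableRel G.Adj] (K : ℕ) :
    (univ.filter fun uv : W × W => G.dist uv.1 uv.2 = 2 * K + 1).card =
      ∑ ab ∈ univ.filter (fun ab : W × W => G.Adj ab.1 ab.2),
        (sideSph G ab.1 ab.2 K).card * (sideSph G ab.2 ab.1 K).card := by
  classical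
  have hdecomp : (univ.filter fun uv : W × W => G.dist uv.1 uv.2 = 2 * K + 1) =
      (univ.filter (fun ab : W × W => G.Adj ab.1 ab.2)).biUnion
        (fun ab => (sideSph G ab.1 ab.2 K) ×ˢ (sideSph G ab.2 ab.1 K)) := by
    ext ⟨u, v⟩
    simp only [mem_filter, mem_univ, true_and, mem_biUnion, mem_product, sideSph, Prod.exists]
    constructor
    · intro huv
      obtain ⟨w, hw⟩ := ht.isConnected.exists_walk_length_eq_dist u v
      have hlen : w.length = 2 * K + 1 := by rw [hw, huv]
      have h1 := tree_getVert_dist ht hw (i := K) (by omega)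
      have h2 := tree_getVert_dist ht hw (i := K + 1) (by omega)
      set a := w.getVert K with hadef
      set b := w.getVert (K + 1) with hbdef
      rw [hlen] at h1 h2
      have hab : G.Adj a b := w.adj_getVert_succ (by omega)
      have hvb : G.dist v b = K := by
        have := h2.2
        rw [SimpleGraph.dist_comm]
        omega
      have hva : G.dist v a = K + 1 := by
        have := h1.2
        rw [SimpleGraph.dist_comm]
        omega
      exact ⟨a, b, hab, ⟨h1.1, h2.1⟩, hvb, hva⟩
    · rintro ⟨a, b, hab, ⟨hua, hub⟩, hvb, hva⟩
      have := tree_cross ht hab (u := u) (v := v) (by omega) (by omega)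
      have e : G.dist b v = G.dist v b := SimpleGraph.dist_comm ..
      omega
  rw [hdecomp, card_biUnion]
  · exact sum_congr rfl fun ab _ => card_product _ _
  · rintro ⟨a, b⟩ hab ⟨a', b'⟩ hab' hne
    simp only [mem_coe, mem_filter, mem_univ, true_and] at hab hab'
    rw [Function.onFun, Finset.disjoint_left]
    rintro ⟨u, v⟩ huv huv'
    simp only [mem_product, sideSph, mem_filter, mem_univ, true_and] at huv huv'
    obtain ⟨⟨hua, hub⟩, hvb, hva⟩ := huv
    obtain ⟨⟨hua', hub'⟩, hvb', hva'⟩ := huv'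
    have hL : G.dist u v = 2 * K + 1 := by
      have := tree_cross ht hab (u := u) (v := v) (by omega) (by omega)
      have e : G.dist b v = G.dist v b := SimpleGraph.dist_comm ..
      omega
    have ha : a = a' := by
      refine tree_between_unique ht K hL hua ?_ hua' ?_
      · have e : G.dist a v = G.dist v a := SimpleGraph.dist_comm ..
        omega
      · have e : G.dist a' v = G.dist v a' := SimpleGraph.dist_comm ..
        omega
    have hb : b = b' := by
      refine tree_between_unique ht (K + 1) hL hub ?_ hub' ?_
      · have e : G.dist b v = G.dist v b := SimpleGraph.dist_comm ..
        omega
      · have e : G.dist b' v = G.dist v b' := SimpleGraph.dist_comm ..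
        omega
    exact hne (by rw [ha, hb])

theorem countAux {m K q R : ℕ} (hm : 2 ≤ m) (hR : R = K + q) [DecidableRel G.Adj]
    (ht : G.IsTree)
    (hdeg : ∀ v : W, G.degree v = 1 ∨ G.degree v = m + 1)
    (hle : ∀ u v : W, G.dist u v ≤ 2 * R + 1)
    (hex : ∃ u v : W, G.dist u v = 2 * R + 1)
    (hleaf : ∀ v : W, G.degree v = 1 → ∃ u : W, G.dist u v = 2 * R + 1) :
    pathCount G (2 * K + 1) = m ^ (2 * K) * (1 + 2 * ∑ j ∈ Icc 1 q, m ^ j) := by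
  classical
  obtain ⟨c1, c2, hcc, hdepR, hdiam⟩ := exists_centers ht hle hex
  have hleafdep : ∀ x, G.degree x = 1 → dp G c1 c2 x = R := fun x hx => by
    obtain ⟨u, hu⟩ := hleaf x hx
    exact hdiam x u hu
  -- counting the set of "good" vertices (depth between 1 and q)
  have hT : (univ.filter fun a : W => 1 ≤ dp G c1 c2 a ∧ dp G c1 c2 a ≤ q).card =
      ∑ j ∈ Icc 1 q, 2 * m ^ j := by
    have hmap : ∀ a ∈ (univ.filter fun a : W => 1 ≤ dp G c1 c2 a ∧ dp G c1 c2 a ≤ q),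
        dp G c1 c2 a ∈ Icc 1 q := by
      intro a ha
      simp only [mem_filter, mem_univ, true_and] at ha
      exact mem_Icc.mpr ha
    rw [card_eq_sum_card_fiberwise hmap]
    refine sum_congr rfl ?_
    intro j hj
    rw [mem_Icc] at hj
    have hfib : (univ.filter fun a : W => 1 ≤ dp G c1 c2 a ∧ dp G c1 c2 a ≤ q).filter
        (fun a => dp G c1 c2 a = j) = sideSph G c1 c2 j ∪ sideSph G c2 c1 j := by
      ext x
      simp only [filter_filter, mem_filter, mem_univ, true_and, mem_union, sideSph]
      constructor
      · rintro ⟨-, hdp⟩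
        rcases dp_cases ht hcc x with ⟨h1, h2⟩ | ⟨h1, h2⟩
        · exact Or.inl ⟨by omega, by omega⟩
        · exact Or.inr ⟨by omega, by omega⟩
      · have hmin : dp G c1 c2 x = min (G.dist x c1) (G.dist x c2) := rfl
        rintro (⟨h1, h2⟩ | ⟨h1, h2⟩)
        · have hj' : dp G c1 c2 x = j := by
            rw [hmin, h1, h2]; exact min_eq_left (by omega)
          exact ⟨⟨by omega, by omega⟩, hj'⟩
        · have hj' : dp G c1 c2 x = j := by
            rw [hmin, h1, h2]; exact min_eq_right (by omega)
          exact ⟨⟨by omega, by omega⟩, hj'⟩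
    rw [hfib, card_union_of_disjoint]
    · rw [lemA ht hdeg hleafdep j c1 c2 hcc (by rw [dp_self_left hcc]; omega),
        lemA ht hdeg hleafdep j c2 c1 hcc.symm (by rw [dp_self_right hcc]; omega)]
      omega
    · rw [Finset.disjoint_left]
      intro x hx hx'
      simp only [sideSph, mem_filter, mem_univ, true_and] at hx hx'
      omega
  -- the three pieces of the good edge set
  have e0 : (univ.filter fun ab : W × W => G.Adj ab.1 ab.2 ∧
      dp G c1 c2 ab.1 ≤ q ∧ dp G c1 c2 ab.2 ≤ q ∧
      dp G c1 c2 ab.1 = dp G c1 c2 ab.2).card = 2 := by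
    have hset : (univ.filter fun ab : W × W => G.Adj ab.1 ab.2 ∧
        dp G c1 c2 ab.1 ≤ q ∧ dp G c1 c2 ab.2 ≤ q ∧
        dp G c1 c2 ab.1 = dp G c1 c2 ab.2) = {(c1, c2), (c2, c1)} := by
      ext ⟨a, b⟩
      simp only [mem_filter, mem_univ, true_and, mem_insert, mem_singleton, Prod.mk.injEq]
      constructor
      · rintro ⟨hab, -, -, heq⟩
        rcases classify (c1 := c1) (c2 := c2) ht hcc hab with
          ⟨h1, h2⟩ | ⟨h1, h2⟩ | h | h
        · exact Or.inl ⟨h1, h2⟩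
        · exact Or.inr ⟨h1, h2⟩
        · omega
        · omega
      · have d1 : dp G c1 c2 c1 = 0 := dp_self_left hcc
        have d2 : dp G c1 c2 c2 = 0 := dp_self_right hcc
        rintro (⟨rfl, rfl⟩ | ⟨rfl, rfl⟩)
        · exact ⟨hcc, by omega, by omega, by omega⟩
        · exact ⟨hcc.symm, by omega, by omega, by omega⟩
    rw [hset, card_insert_of_notMem, card_singleton]
    simp only [mem_singleton, Prod.mk.injEq]
    intro h
    exact hcc.ne h.1
  have e1 : (univ.filter fun ab : W × W => G.Adj ab.1 ab.2 ∧
      dp G c1 c2 ab.1 ≤ q ∧ dp G c1 c2 ab.2 ≤ q ∧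
      dp G c1 c2 ab.1 = dp G c1 c2 ab.2 + 1).card = ∑ j ∈ Icc 1 q, 2 * m ^ j := by
    rw [← hT]
    apply card_bij (fun ab _ => ab.1)
    · rintro ⟨a, b⟩ hab
      simp only [mem_filter, mem_univ, true_and] at hab ⊢
      obtain ⟨-, h1, h2, h3⟩ := hab
      exact ⟨by omega, by omega⟩
    · rintro ⟨a, b⟩ hab ⟨a', b'⟩ hab' heq
      simp only [mem_filter, mem_univ, true_and] at hab hab'
      obtain ⟨hadj, -, -, he⟩ := hab
      obtain ⟨hadj', -, -, he'⟩ := hab'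
      simp only at heq
      subst heq
      have hj : dp G c1 c2 a = dp G c1 c2 b + 1 := he
      have huniq := (parent (c1 := c1) (c2 := c2) ht hcc hj).2
      have hbb : b = b' := huniq b b' hadj rfl hadj' (by omega)
      rw [Prod.mk.injEq]
      exact ⟨rfl, hbb⟩
    · intro a ha
      simp only [mem_filter, mem_univ, true_and] at ha
      obtain ⟨h1, h2⟩ := ha
      obtain ⟨j, hj⟩ : ∃ j, dp G c1 c2 a = j + 1 := ⟨dp G c1 c2 a - 1, by omega⟩
      obtain ⟨b, hadj, hdpb⟩ := (parent (c1 := c1) (c2 := c2) ht hcc hj).1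
      refine ⟨(a, b), ?_, rfl⟩
      simp only [mem_filter, mem_univ, true_and]
      exact ⟨hadj, by omega, by omega, by omega⟩
  have e2 : (univ.filter fun ab : W × W => G.Adj ab.1 ab.2 ∧
      dp G c1 c2 ab.1 ≤ q ∧ dp G c1 c2 ab.2 ≤ q ∧
      dp G c1 c2 ab.2 = dp G c1 c2 ab.1 + 1).card = ∑ j ∈ Icc 1 q, 2 * m ^ j := by
    rw [← e1]
    have himg : (univ.filter fun ab : W × W => G.Adj ab.1 ab.2 ∧
        dp G c1 c2 ab.1 ≤ q ∧ dp G c1 c2 ab.2 ≤ q ∧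
        dp G c1 c2 ab.2 = dp G c1 c2 ab.1 + 1) =
        (univ.filter fun ab : W × W => G.Adj ab.1 ab.2 ∧
        dp G c1 c2 ab.1 ≤ q ∧ dp G c1 c2 ab.2 ≤ q ∧
        dp G c1 c2 ab.1 = dp G c1 c2 ab.2 + 1).image Prod.swap := by
      ext ⟨a, b⟩
      simp only [mem_filter, mem_univ, true_and, mem_image, Prod.exists, Prod.swap_prod_mk,
        Prod.mk.injEq]
      constructor
      · rintro ⟨hadj, h1, h2, h3⟩
        exact ⟨b, a, ⟨hadj.symm, h2, h1, h3⟩, rfl, rfl⟩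
      · rintro ⟨x, y, ⟨hadj, h1, h2, h3⟩, rfl, rfl⟩
        exact ⟨hadj.symm, h2, h1, h3⟩
    rw [himg, card_image_of_injective _ Prod.swap_injective]
  -- partition of the good edge set
  have hGoodCard : (univ.filter fun ab : W × W => G.Adj ab.1 ab.2 ∧
      dp G c1 c2 ab.1 ≤ q ∧ dp G c1 c2 ab.2 ≤ q).card =
      2 + 2 * ∑ j ∈ Icc 1 q, 2 * m ^ j := by
    have hsplit1 := card_filter_add_card_filter_not
      (s := univ.filter fun ab : W × W => G.Adj ab.1 ab.2 ∧
        dp G c1 c2 ab.1 ≤ q ∧ dp G c1 c2 ab.2 ≤ q)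
      (p := fun ab => dp G c1 c2 ab.1 = dp G c1 c2 ab.2)
    have hsplit2 := card_filter_add_card_filter_not
      (s := (univ.filter fun ab : W × W => G.Adj ab.1 ab.2 ∧
        dp G c1 c2 ab.1 ≤ q ∧ dp G c1 c2 ab.2 ≤ q).filter
        (fun ab => ¬ dp G c1 c2 ab.1 = dp G c1 c2 ab.2))
      (p := fun ab => dp G c1 c2 ab.1 = dp G c1 c2 ab.2 + 1)
    have r0 : (univ.filter fun ab : W × W => G.Adj ab.1 ab.2 ∧
        dp G c1 c2 ab.1 ≤ q ∧ dp G c1 c2 ab.2 ≤ q).filter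
        (fun ab => dp G c1 c2 ab.1 = dp G c1 c2 ab.2) =
        (univ.filter fun ab : W × W => G.Adj ab.1 ab.2 ∧
        dp G c1 c2 ab.1 ≤ q ∧ dp G c1 c2 ab.2 ≤ q ∧
        dp G c1 c2 ab.1 = dp G c1 c2 ab.2) := by
      rw [filter_filter]
      apply filter_congr
      rintro ⟨a, b⟩ -
      simp only [and_assoc]
    have r1 : ((univ.filter fun ab : W × W => G.Adj ab.1 ab.2 ∧
        dp G c1 c2 ab.1 ≤ q ∧ dp G c1 c2 ab.2 ≤ q).filter
        (fun ab => ¬ dp G c1 c2 ab.1 = dp G c1 c2 ab.2)).filter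
        (fun ab => dp G c1 c2 ab.1 = dp G c1 c2 ab.2 + 1) =
        (univ.filter fun ab : W × W => G.Adj ab.1 ab.2 ∧
        dp G c1 c2 ab.1 ≤ q ∧ dp G c1 c2 ab.2 ≤ q ∧
        dp G c1 c2 ab.1 = dp G c1 c2 ab.2 + 1) := by
      rw [filter_filter, filter_filter]
      apply filter_congr
      rintro ⟨a, b⟩ -
      simp only [and_assoc]
      constructor
      · rintro ⟨x, y, z, -, w⟩; exact ⟨x, y, z, w⟩
      · rintro ⟨x, y, z, w⟩; exact ⟨x, y, z, by omega, w⟩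
    have r2 : ((univ.filter fun ab : W × W => G.Adj ab.1 ab.2 ∧
        dp G c1 c2 ab.1 ≤ q ∧ dp G c1 c2 ab.2 ≤ q).filter
        (fun ab => ¬ dp G c1 c2 ab.1 = dp G c1 c2 ab.2)).filter
        (fun ab => ¬ dp G c1 c2 ab.1 = dp G c1 c2 ab.2 + 1) =
        (univ.filter fun ab : W × W => G.Adj ab.1 ab.2 ∧
        dp G c1 c2 ab.1 ≤ q ∧ dp G c1 c2 ab.2 ≤ q ∧
        dp G c1 c2 ab.2 = dp G c1 c2 ab.1 + 1) := by
      rw [filter_filter, filter_filter]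
      apply filter_congr
      rintro ⟨a, b⟩ -
      simp only [and_assoc]
      constructor
      · rintro ⟨x, y, z, h0, h1⟩
        refine ⟨x, y, z, ?_⟩
        rcases classify (c1 := c1) (c2 := c2) ht hcc x with
          ⟨ha, hb⟩ | ⟨ha, hb⟩ | h | h
        · exfalso
          rw [ha, hb, dp_self_left hcc, dp_self_right hcc] at h0
          exact h0 rfl
        · exfalso
          rw [ha, hb, dp_self_right hcc, dp_self_left hcc] at h0
          exact h0 rfl
        · omega
        · exact h
      · rintro ⟨x, y, z, w⟩
        exact ⟨x, y, z, by omega, by omega⟩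
    rw [r0] at hsplit1
    rw [r1, r2] at hsplit2
    rw [e0] at hsplit1
    rw [e1, e2] at hsplit2
    omega
  -- sum over edges
  have hOP := ordered_decomp (G := G) ht K
  rw [two_mul_pathCount (by omega)] at hOP
  rw [← sum_filter_add_sum_filter_not (univ.filter (fun ab : W × W => G.Adj ab.1 ab.2))
    (fun ab => dp G c1 c2 ab.1 ≤ q ∧ dp G c1 c2 ab.2 ≤ q)] at hOP
  have hbad : ∀ ab ∈ (univ.filter (fun ab : W × W => G.Adj ab.1 ab.2)).filter
      (fun ab => ¬ (dp G c1 c2 ab.1 ≤ q ∧ dp G c1 c2 ab.2 ≤ q)),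
      (sideSph G ab.1 ab.2 K).card * (sideSph G ab.2 ab.1 K).card = 0 := by
    rintro ⟨a, b⟩ habm
    simp only [filter_filter, mem_filter, mem_univ, true_and, not_and_or, not_le] at habm
    obtain ⟨hab, hbadc⟩ := habm
    have hd1 : dp G c1 c2 c1 = 0 := dp_self_left hcc
    have hd2 : dp G c1 c2 c2 = 0 := dp_self_right hcc
    rcases classify (c1 := c1) (c2 := c2) ht hcc hab with ⟨ha, hb⟩ | ⟨ha, hb⟩ | h | h
    · exfalso; rw [ha, hb] at hbadc; omega
    · exfalso; rw [ha, hb] at hbadc; omega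
    · have hz : sideSph G a b K = ∅ := lemB ht hcc hdepR hab (by omega) (by omega)
      simp [hz]
    · have hz : sideSph G b a K = ∅ := lemB ht hcc hdepR hab.symm (by omega) (by omega)
      simp [hz]
  have hgoodval : ∀ ab ∈ (univ.filter (fun ab : W × W => G.Adj ab.1 ab.2)).filter
      (fun ab => dp G c1 c2 ab.1 ≤ q ∧ dp G c1 c2 ab.2 ≤ q),
      (sideSph G ab.1 ab.2 K).card * (sideSph G ab.2 ab.1 K).card = m ^ (2 * K) := by
    rintro ⟨a, b⟩ habm
    simp only [filter_filter, mem_filter, mem_univ, true_and] at habm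
    obtain ⟨hab, hga, hgb⟩ := habm
    rw [lemA ht hdeg hleafdep K a b hab (by omega),
      lemA ht hdeg hleafdep K b a hab.symm (by omega), ← pow_add]
    congr 1
    omega
  rw [sum_congr rfl hgoodval, sum_congr rfl hbad, sum_const, smul_eq_mul,
    sum_const_zero, add_zero] at hOP
  have hfeq : (univ.filter (fun ab : W × W => G.Adj ab.1 ab.2)).filter
      (fun ab => dp G c1 c2 ab.1 ≤ q ∧ dp G c1 c2 ab.2 ≤ q) =
      univ.filter fun ab : W × W => G.Adj ab.1 ab.2 ∧
        dp G c1 c2 ab.1 ≤ q ∧ dp G c1 c2 ab.2 ≤ q := by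
    rw [filter_filter]
  rw [hfeq, hGoodCard] at hOP
  have hSum : (2 + 2 * ∑ j ∈ Icc 1 q, 2 * m ^ j) * m ^ (2 * K) =
      2 * (m ^ (2 * K) * (1 + 2 * ∑ j ∈ Icc 1 q, m ^ j)) := by
    have : ∑ j ∈ Icc 1 q, 2 * m ^ j = 2 * ∑ j ∈ Icc 1 q, m ^ j := by
      rw [mul_sum]
    rw [this]
    ring
  rw [hSum] at hOP
  omega


lemma geom_aux {m : ℕ} (q : ℕ) :
    ((m : ℚ) - 1) * ∑ j ∈ Icc 1 q, (m : ℚ) ^ j = (m : ℚ) ^ (q + 1) - m := by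
  induction q with
  | zero => simp
  | succ q ih =>
    rw [Finset.sum_Icc_succ_top (by omega), mul_add, ih]
    ring

end Fin
end UnrootedAux

theorem unrooted_oddD_odd_paths (m k r : ℕ) (hm : 2 ≤ m)
    (hk : 1 ≤ k) (hkr : k ≤ r)
    {W : Type} [Fintype W] [DecidableEq W] (G : SimpleGraph W) [DecidableRel G.Adj]
    (hG : IsPerfectUnrootedMary m (2 * r - 1) G) :
    (pathCount G (2 * k - 1) : ℚ) =
      (m : ℚ) ^ (2 * k - 2) / ((m : ℚ) - 1) *
        (2 * (m : ℚ) ^ (r - k + 1) - ((m : ℚ) + 1)) := by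
  classical
  obtain ⟨ht, hdeg', hle, hex, hleaf⟩ := hG
  obtain ⟨K, rfl⟩ : ∃ K, k = K + 1 := ⟨k - 1, by omega⟩
  obtain ⟨q, rfl⟩ : ∃ q, r = (K + 1) + q := ⟨r - (K + 1), by omega⟩
  have hD : 2 * (K + 1 + q) - 1 = 2 * (K + q) + 1 := by omega
  rw [hD] at hle hex hleaf
  have hdeg : ∀ v : W, G.degree v = 1 ∨ G.degree v = m + 1 := hdeg' (by omega)
  have ht2 : 2 * (K + 1) - 1 = 2 * K + 1 := by omega
  rw [ht2]
  rw [UnrootedAux.countAux hm rfl ht hdeg hle hex hleaf]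
  have e1 : 2 * (K + 1) - 2 = 2 * K := by omega
  have e2 : K + 1 + q - (K + 1) + 1 = q + 1 := by omega
  rw [e1, e2]
  have hm1 : (m : ℚ) - 1 ≠ 0 := by
    have h2 : (2 : ℚ) ≤ (m : ℚ) := by exact_mod_cast hm
    intro h
    linarith
  have hg := UnrootedAux.geom_aux (m := m) q
  push_cast
  field_simp
  linear_combination 2 * hg
end

section
/- Let m ≥ 2 and let k, r be integers with 1 ≤ k < r. Then the number of paths of length t = 2k in the perfect unrooted m-ary tree of diameter D = 2r−1 equals (m^(2k−1)/(m−1)) · ( (m+1)·m^(r−k) − (m+1) ). -/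
open SimpleGraph Finset

namespace TreeAux

variable {V : Type} [DecidableEq V] {G : SimpleGraph V}

lemma isPath_of_length_eq_dist {u v : V} (p : G.Walk u v)
    (h : p.length = G.dist u v) : p.IsPath := by
  have h1 : G.dist u v ≤ p.bypass.length := SimpleGraph.dist_le _
  have h2 := p.bypass_eq_self_of_length_le (by omega)
  rw [← h2]; exact p.bypass_isPath

lemma path_unique (hT : G.IsTree) {u v : V} (p q : G.Walk u v) (hp : p.IsPath) (hq : q.IsPath) :
    p = q := by
  obtain ⟨w, -, hw⟩ := hT.existsUnique_path u v
  rw [hw p hp, hw q hq]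

lemma length_eq_dist (hT : G.IsTree) {u v : V} (p : G.Walk u v) (hp : p.IsPath) :
    p.length = G.dist u v := by
  obtain ⟨q, hq⟩ := hT.isConnected.exists_walk_length_eq_dist u v
  rw [path_unique hT p q hp (isPath_of_length_eq_dist q hq), hq]

lemma dist_getVert_le (hc : G.Connected) {u v : V} (p : G.Walk u v) (i : ℕ) :
    G.dist u (p.getVert i) ≤ i := by
  induction p generalizing i with
  | nil => simp [SimpleGraph.Walk.getVert, SimpleGraph.dist_self]
  | @cons a b c h q ih =>
    cases i with
    | zero => simp
    | succ i =>
      rw [SimpleGraph.Walk.getVert_cons_succ]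
      have h1 : G.dist a b = 1 := SimpleGraph.dist_eq_one_iff_adj.mpr h
      have h2 := ih i
      have h3 : G.dist a (q.getVert i) ≤ G.dist a b + G.dist b (q.getVert i) := hc.dist_triangle
      omega

set_option linter.unusedSectionVars false

lemma dist_getVert_le' (hc : G.Connected) {u v : V} (p : G.Walk u v) {i : ℕ} (hi : i ≤ p.length) :
    G.dist (p.getVert i) v ≤ p.length - i := by
  have h := dist_getVert_le hc p.reverse (p.length - i)
  rw [SimpleGraph.Walk.getVert_reverse] at h
  have : p.length - (p.length - i) = i := by omega
  rw [this] at h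
  rwa [SimpleGraph.dist_comm]

/-- On a geodesic walk, distances to the endpoints are given by the index. -/
lemma dist_getVert (hc : G.Connected) {u v : V} (p : G.Walk u v)
    (hp : p.length = G.dist u v) {i : ℕ} (hi : i ≤ p.length) :
    G.dist u (p.getVert i) = i ∧ G.dist (p.getVert i) v = p.length - i := by
  have h1 := dist_getVert_le hc p i
  have h2 := dist_getVert_le' hc p hi
  have h3 : G.dist u v ≤ G.dist u (p.getVert i) + G.dist (p.getVert i) v := hc.dist_triangle
  omega

/-- In a tree, a vertex on the path between `u` and `v` splits the distance. -/
lemma dist_add_of_mem_support (hT : G.IsTree) {u v w : V} (p : G.Walk u v) (hp : p.IsPath)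
    (hw : w ∈ p.support) : G.dist u w + G.dist w v = G.dist u v := by
  have h1 : (p.takeUntil w hw).length = G.dist u w :=
    length_eq_dist hT _ (hp.takeUntil hw)
  have h2 : (p.dropUntil w hw).length = G.dist w v :=
    length_eq_dist hT _ (hp.dropUntil hw)
  have h3 := congr_arg SimpleGraph.Walk.length (p.take_spec hw)
  rw [SimpleGraph.Walk.length_append, h1, h2, length_eq_dist hT p hp] at h3
  exact h3

/-- Conversely, a vertex splitting the distance lies on the path. -/
lemma mem_support_of_dist_add (hT : G.IsTree) {u v w : V} (p : G.Walk u v) (hp : p.IsPath)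
    (h : G.dist u w + G.dist w v = G.dist u v) : w ∈ p.support := by
  obtain ⟨q1, hq1⟩ := hT.isConnected.exists_walk_length_eq_dist u w
  obtain ⟨q2, hq2⟩ := hT.isConnected.exists_walk_length_eq_dist w v
  have hlen : (q1.append q2).length = G.dist u v := by
    rw [SimpleGraph.Walk.length_append, hq1, hq2, h]
  have hpath := isPath_of_length_eq_dist _ hlen
  have := path_unique hT p (q1.append q2) hp hpath
  rw [this, SimpleGraph.Walk.mem_support_append_iff]
  exact Or.inl q1.end_mem_support

/-- Vertices on a path at equal distance from the start coincide. -/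
lemma eq_of_dist_eq_on_path (hT : G.IsTree) {u v w w' : V} (p : G.Walk u v) (hp : p.IsPath)
    (hw : w ∈ p.support) (hw' : w' ∈ p.support) (h : G.dist u w = G.dist u w') : w = w' := by
  have hl := length_eq_dist hT p hp
  obtain ⟨i, hi, hile⟩ := SimpleGraph.Walk.mem_support_iff_exists_getVert.mp hw
  obtain ⟨j, hj, hjle⟩ := SimpleGraph.Walk.mem_support_iff_exists_getVert.mp hw'
  have h1 := (dist_getVert hT.isConnected p hl hile).1
  have h2 := (dist_getVert hT.isConnected p hl hjle).1
  rw [hi] at h1; rw [hj] at h2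
  have : i = j := by omega
  rw [← hi, ← hj, this]

/-- Adjacent vertices have distances to `u` differing by exactly one (in a tree). -/
lemma dist_step (hT : G.IsTree) {x y : V} (u : V) (hxy : G.Adj x y) :
    G.dist u y = G.dist u x + 1 ∨ G.dist u x = G.dist u y + 1 := by
  obtain ⟨p, hp⟩ := hT.isConnected.exists_walk_length_eq_dist u x
  have hpath := isPath_of_length_eq_dist p hp
  by_cases hy : y ∈ p.support
  · right
    have := dist_add_of_mem_support hT p hpath hy
    have h1 : G.dist y x = 1 := SimpleGraph.dist_eq_one_iff_adj.mpr hxy.symm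
    omega
  · left
    have hq : (p.concat hxy).IsPath := by
      rw [SimpleGraph.Walk.isPath_def, SimpleGraph.Walk.support_concat]
      simp only [List.concat_eq_append, List.nodup_append]
      exact ⟨hpath.support_nodup, by simp, by simp [hy]; rintro a ha rfl; exact hy ha⟩
    have := length_eq_dist hT _ hq
    rw [SimpleGraph.Walk.length_concat, hp] at this
    omega

/-- Unique neighbour of `w` closer to `u`. -/
lemma closer_neighbor_unique (hT : G.IsTree) {u w x x' : V}
    (hx : G.Adj x w) (hx' : G.Adj x' w)
    (hdx : G.dist u x + 1 = G.dist u w) (hdx' : G.dist u x' + 1 = G.dist u w) : x = x' := by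
  obtain ⟨p, hp⟩ := hT.isConnected.exists_walk_length_eq_dist u w
  have hpath := isPath_of_length_eq_dist p hp
  have hmx : x ∈ p.support := by
    apply mem_support_of_dist_add hT p hpath
    have : G.dist x w = 1 := SimpleGraph.dist_eq_one_iff_adj.mpr hx
    omega
  have hmx' : x' ∈ p.support := by
    apply mem_support_of_dist_add hT p hpath
    have : G.dist x' w = 1 := SimpleGraph.dist_eq_one_iff_adj.mpr hx'
    omega
  exact eq_of_dist_eq_on_path hT p hpath hmx hmx' (by omega)

/-- In a tree, an edge whose endpoints lie on opposite sides of the edge `{x,w}`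
must be that edge itself. -/
lemma flip_eq (hT : G.IsTree) {x w a b : V} (hxw : G.Adj x w) (hab : G.Adj a b)
    (ha : G.dist a w = G.dist a x + 1) (hb : G.dist b x = G.dist b w + 1) :
    a = x ∧ b = w := by
  have hstepx := dist_step hT x hab.symm
  have hstepw := dist_step hT w hab.symm
  have e1 : G.dist x a = G.dist a x := SimpleGraph.dist_comm
  have e2 : G.dist x b = G.dist b x := SimpleGraph.dist_comm
  have e3 : G.dist w a = G.dist a w := SimpleGraph.dist_comm
  have e4 : G.dist w b = G.dist b w := SimpleGraph.dist_comm
  have hcase : G.dist b x = G.dist a x + 1 := by omega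
  by_cases hax : G.dist a x = 0
  · have ha' : a = x := (hT.isConnected.dist_eq_zero_iff).mp hax
    have hbw : G.dist b w = 0 := by omega
    exact ⟨ha', (hT.isConnected.dist_eq_zero_iff).mp hbw⟩
  · exfalso
    obtain ⟨p, hp⟩ := hT.isConnected.exists_walk_length_eq_dist a x
    have hpath := isPath_of_length_eq_dist p hp
    have hwns : w ∉ p.support := by
      intro hmem
      have := dist_add_of_mem_support hT p hpath hmem
      omega
    have hq : (p.concat hxw).IsPath := by
      rw [SimpleGraph.Walk.isPath_def, SimpleGraph.Walk.support_concat]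
      simp only [List.concat_eq_append, List.nodup_append]
      exact ⟨hpath.support_nodup, by simp, by simp [hwns]; rintro z hz rfl; exact hwns hz⟩
    have hbmem : b ∈ (p.concat hxw).support := by
      apply mem_support_of_dist_add hT _ hq
      have h1 : G.dist a b = 1 := SimpleGraph.dist_eq_one_iff_adj.mpr hab
      omega
    rw [SimpleGraph.Walk.support_concat, List.mem_append] at hbmem
    rcases hbmem with hbp | hbw
    · have := dist_add_of_mem_support hT p hpath hbp
      have h1 : G.dist a b = 1 := SimpleGraph.dist_eq_one_iff_adj.mpr hab
      omega
    · simp only [List.mem_singleton] at hbw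
      have : G.dist b w = 0 := by rw [hbw]; exact SimpleGraph.dist_self
      omega

/-- Distance formula across an edge of the tree. -/
lemma dist_across_edge (hT : G.IsTree) {x w u v : V} (hxw : G.Adj x w)
    (hu : G.dist u w = G.dist u x + 1) (hv : G.dist v x = G.dist v w + 1) :
    G.dist u v = G.dist u x + 1 + G.dist w v := by
  obtain ⟨p, hp⟩ := hT.isConnected.exists_walk_length_eq_dist u v
  have hQ : ∀ z : V, G.dist z w = G.dist z x + 1 ∨ G.dist z x = G.dist z w + 1 :=
    fun z => dist_step hT z hxw
  have hex : ∃ j, ¬ (G.dist (p.getVert j) w = G.dist (p.getVert j) x + 1) := by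
    refine ⟨p.length, ?_⟩
    rw [SimpleGraph.Walk.getVert_length]
    omega
  classical
  have hj0spec := Nat.find_spec hex
  set j0 := Nat.find hex with hj0
  have hj0pos : 0 < j0 := by
    rcases Nat.eq_zero_or_pos j0 with h0 | h0
    · exfalso
      rw [h0, SimpleGraph.Walk.getVert_zero] at hj0spec
      exact hj0spec hu
    · exact h0
  have hj0le : j0 ≤ p.length := by
    by_contra hlt
    push_neg at hlt
    have hmin := Nat.find_min hex (m := p.length) (by omega)
    rw [SimpleGraph.Walk.getVert_length] at hmin
    omega
  have hQi : G.dist (p.getVert (j0 - 1)) w = G.dist (p.getVert (j0 - 1)) x + 1 := by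
    have hmin := Nat.find_min hex (m := j0 - 1) (by omega)
    exact not_not.mp hmin
  have hQj : G.dist (p.getVert j0) x = G.dist (p.getVert j0) w + 1 := by
    rcases hQ (p.getVert j0) with h | h
    · exact absurd h hj0spec
    · exact h
  have hadj : G.Adj (p.getVert (j0 - 1)) (p.getVert j0) := by
    have h := p.adj_getVert_succ (i := j0 - 1) (by omega)
    have heq : j0 - 1 + 1 = j0 := by omega
    rwa [heq] at h
  obtain ⟨hax, hbw⟩ := flip_eq hT hxw hadj hQi hQj
  have hd1 := dist_getVert hT.isConnected p hp (i := j0 - 1) (by omega)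
  have hd2 := dist_getVert hT.isConnected p hp (i := j0) (by omega)
  rw [hax] at hd1
  rw [hbw] at hd2
  omega

/-- Midpoint of a pair at even distance: existence and uniqueness. -/
lemma midpoint_exists_unique (hT : G.IsTree) {u v : V} {k : ℕ} (h : G.dist u v = 2 * k) :
    ∃! w : V, G.dist u w = k ∧ G.dist w v = k := by
  obtain ⟨p, hp⟩ := hT.isConnected.exists_walk_length_eq_dist u v
  have hpath := isPath_of_length_eq_dist p hp
  have hk : k ≤ p.length := by omega
  obtain ⟨hd1, hd2⟩ := dist_getVert hT.isConnected p hp hk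
  refine ⟨p.getVert k, ⟨hd1, by omega⟩, ?_⟩
  intro w ⟨hw1, hw2⟩
  have hmemw : w ∈ p.support := mem_support_of_dist_add hT p hpath (by omega)
  have hmemg : p.getVert k ∈ p.support :=
    SimpleGraph.Walk.mem_support_iff_exists_getVert.mpr ⟨k, rfl, hk⟩
  exact eq_of_dist_eq_on_path hT p hpath hmemw hmemg (by omega)

/-- The neighbour of `x` in the direction of `u` (second vertex of the geodesic). -/
noncomputable def nextStep (hc : G.Connected) (x u : V) : V :=
  ((hc.exists_walk_length_eq_dist x u).choose).getVert 1

lemma nextStep_spec (hT : G.IsTree) {x u : V} (hpos : 0 < G.dist x u) :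
    G.Adj x (nextStep hT.isConnected x u) ∧
      G.dist (nextStep hT.isConnected x u) u + 1 = G.dist x u := by
  set p := (hT.isConnected.exists_walk_length_eq_dist x u).choose with hp
  have hlen : p.length = G.dist x u := (hT.isConnected.exists_walk_length_eq_dist x u).choose_spec
  have h1 : 1 ≤ p.length := by omega
  constructor
  · show G.Adj x (p.getVert 1)
    have := p.adj_getVert_succ (i := 0) (by omega)
    rwa [SimpleGraph.Walk.getVert_zero] at this
  · show G.dist (p.getVert 1) u + 1 = G.dist x u
    have h2 := (dist_getVert hT.isConnected p hlen (i := 1) h1).2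
    omega

lemma nextStep_eq (hT : G.IsTree) {x u y : V} (hadj : G.Adj x y)
    (hd : G.dist y u + 1 = G.dist x u) : y = nextStep hT.isConnected x u := by
  set p := (hT.isConnected.exists_walk_length_eq_dist x u).choose with hp
  have hlen : p.length = G.dist x u := (hT.isConnected.exists_walk_length_eq_dist x u).choose_spec
  have hpath := isPath_of_length_eq_dist p hlen
  have hdy : G.dist x y = 1 := SimpleGraph.dist_eq_one_iff_adj.mpr hadj
  have hmy : y ∈ p.support := mem_support_of_dist_add hT p hpath (by omega)
  have h1 : 1 ≤ p.length := by omega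
  have hmn : p.getVert 1 ∈ p.support :=
    SimpleGraph.Walk.mem_support_iff_exists_getVert.mpr ⟨1, rfl, h1⟩
  have hd1 : G.dist x (p.getVert 1) = 1 := (dist_getVert hT.isConnected p hlen h1).1
  show y = p.getVert 1
  exact eq_of_dist_eq_on_path hT p hpath hmy hmn (by omega)

end TreeAux

open TreeAux

section Centered

variable {W : Type} [Fintype W] [DecidableEq W] {G : SimpleGraph W} [DecidableRel G.Adj]
variable {m h : ℕ} {c₁ c₂ : W}

/-- The depth of a vertex: its distance to the nearer of the two centres. -/
noncomputable def dpt (G : SimpleGraph W) (c₁ c₂ w : W) : ℕ := min (G.dist w c₁) (G.dist w c₂)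

/-- The set of vertices at distance `j` from `x` on the far side from `w`. -/
noncomputable def Dset (G : SimpleGraph W) (j : ℕ) (x w : W) : Finset W :=
  Finset.univ.filter (fun u => G.dist u x = j ∧ G.dist u w = j + 1)

variable (hT : G.IsTree) (hcc : G.Adj c₁ c₂)
  (hcov : ∀ w : W, dpt G c₁ c₂ w ≤ h)
  (hdeg : ∀ x : W, dpt G c₁ c₂ x < h → G.degree x = m + 1)

include hT hcc

/-- Every vertex is strictly nearer to one centre than to the other. -/
lemma side_cases (w : W) :
    (G.dist w c₁ = dpt G c₁ c₂ w ∧ G.dist w c₂ = dpt G c₁ c₂ w + 1) ∨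
    (G.dist w c₂ = dpt G c₁ c₂ w ∧ G.dist w c₁ = dpt G c₁ c₂ w + 1) := by
  have := dist_step hT w hcc
  unfold dpt
  omega

lemma dpt_adj_le (hT : G.IsTree) {x y : W} (hxy : G.Adj x y) :
    dpt G c₁ c₂ y ≤ dpt G c₁ c₂ x + 1 := by
  have h1 := dist_step hT c₁ hxy
  have h2 := dist_step hT c₂ hxy
  have e1 : G.dist c₁ x = G.dist x c₁ := SimpleGraph.dist_comm
  have e2 : G.dist c₁ y = G.dist y c₁ := SimpleGraph.dist_comm
  have e3 : G.dist c₂ x = G.dist x c₂ := SimpleGraph.dist_comm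
  have e4 : G.dist c₂ y = G.dist y c₂ := SimpleGraph.dist_comm
  unfold dpt
  omega

include hcov hdeg in
/-- Branch counting: the set of vertices at distance `j` from `x`, away from the
neighbour `w`, has exactly `m ^ j` elements, provided there is room below. -/
lemma claimR : ∀ (j : ℕ) (x w : W), G.Adj x w → dpt G c₁ c₂ x + j ≤ h →
    (Dset G j x w).card = m ^ j := by
  intro j
  induction j with
  | zero =>
    intro x w hadj _
    have : Dset G 0 x w = {x} := by
      ext u
      simp only [Dset, Finset.mem_filter, Finset.mem_univ, true_and, Finset.mem_singleton]
      constructor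
      · rintro ⟨h1, -⟩
        exact (hT.isConnected.dist_eq_zero_iff).mp h1
      · rintro rfl
        exact ⟨SimpleGraph.dist_self, SimpleGraph.dist_eq_one_iff_adj.mpr hadj⟩
    rw [this]; simp
  | succ j ih =>
    intro x w hadj hdepth
    have hcard := Finset.card_eq_sum_card_fiberwise
      (s := Dset G (j+1) x w) (t := (G.neighborFinset x).erase w)
      (f := fun u => nextStep hT.isConnected x u) ?_
    · rw [hcard]
      have hfib : ∀ y ∈ (G.neighborFinset x).erase w,
          ((Dset G (j+1) x w).filter (fun u => nextStep hT.isConnected x u = y))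
            = Dset G j y x := by
        intro y hy
        rw [Finset.mem_erase, SimpleGraph.mem_neighborFinset] at hy
        obtain ⟨hyw, hxy⟩ := hy
        ext u
        simp only [Dset, Finset.mem_filter, Finset.mem_univ, true_and]
        constructor
        · rintro ⟨⟨h1, h2⟩, h3⟩
          have hpos : 0 < G.dist x u := by
            rw [SimpleGraph.dist_comm]; omega
          have hspec := (nextStep_spec hT hpos).2
          rw [h3] at hspec
          have e1 : G.dist y u = G.dist u y := SimpleGraph.dist_comm
          have e2 : G.dist x u = G.dist u x := SimpleGraph.dist_comm
          refine ⟨by omega, by omega⟩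
        · rintro ⟨h1, h2⟩
          have h3 : G.dist u w = j + 2 := by
            have hsw := dist_step hT u hadj
            -- rule out `G.dist u w = j`, which would force `w = y`
            rcases hsw with hl | hr
            · omega
            · exfalso
              have hwy : w = y := by
                apply closer_neighbor_unique hT (u := u) hadj.symm hxy.symm <;> omega
              exact hyw hwy.symm
          refine ⟨⟨h2, h3⟩, ?_⟩
          · symm
            apply nextStep_eq hT hxy
            have e1 : G.dist y u = G.dist u y := SimpleGraph.dist_comm
            have e2 : G.dist x u = G.dist u x := SimpleGraph.dist_comm
            omega
      rw [Finset.sum_congr rfl (fun y hy => by rw [hfib y hy])]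
      have hval : ∀ y ∈ (G.neighborFinset x).erase w, (Dset G j y x).card = m ^ j := by
        intro y hy
        rw [Finset.mem_erase, SimpleGraph.mem_neighborFinset] at hy
        apply ih y x hy.2.symm
        have := dpt_adj_le (c₁ := c₁) (c₂ := c₂) hT hcc hT hy.2.symm.symm
        omega
      rw [Finset.sum_congr rfl hval, Finset.sum_const]
      have hdegx : G.degree x = m + 1 := hdeg x (by omega)
      have hwmem : w ∈ G.neighborFinset x := by
        rw [SimpleGraph.mem_neighborFinset]; exact hadj
      rw [Finset.card_erase_of_mem hwmem]
      rw [← SimpleGraph.card_neighborFinset_eq_degree] at hdegx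
      rw [hdegx]
      simp [pow_succ]
      ring
    · -- the fiber map lands in the right set
      intro u hu
      simp only [Finset.mem_coe, Dset, Finset.mem_filter, Finset.mem_univ, true_and] at hu
      obtain ⟨h1, h2⟩ := hu
      have hpos : 0 < G.dist x u := by
        rw [SimpleGraph.dist_comm]; omega
      obtain ⟨hadj', hspec⟩ := nextStep_spec hT hpos
      rw [Finset.mem_coe, Finset.mem_erase, SimpleGraph.mem_neighborFinset]
      refine ⟨?_, hadj'⟩
      intro hcontr
      rw [show nextStep hT.isConnected x u = w from hcontr] at hspec
      have e1 : G.dist w u = G.dist u w := SimpleGraph.dist_comm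
      have e2 : G.dist x u = G.dist u x := SimpleGraph.dist_comm
      omega

/-- Depth of adjacent vertices differs by exactly one (away from the centre edge). -/
lemma neighbor_depth {x y : W} (hxy : G.Adj x y) (hx1 : 1 ≤ dpt G c₁ c₂ x) :
    dpt G c₁ c₂ y = dpt G c₁ c₂ x + 1 ∨ dpt G c₁ c₂ y + 1 = dpt G c₁ c₂ x := by
  have s1 := dist_step hT c₁ hxy
  have s2 := dist_step hT c₂ hxy
  have e1 : G.dist c₁ x = G.dist x c₁ := SimpleGraph.dist_comm
  have e2 : G.dist c₁ y = G.dist y c₁ := SimpleGraph.dist_comm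
  have e3 : G.dist c₂ x = G.dist x c₂ := SimpleGraph.dist_comm
  have e4 : G.dist c₂ y = G.dist y c₂ := SimpleGraph.dist_comm
  rcases side_cases hT hcc x with ⟨ha1, ha2⟩ | ⟨ha1, ha2⟩ <;>
    rcases side_cases hT hcc y with ⟨hb1, hb2⟩ | ⟨hb1, hb2⟩
  · omega
  · -- x near c₁, y near c₂: the edge would cross the centre edge
    exfalso
    obtain ⟨hx, -⟩ := flip_eq hT hcc hxy (by omega) (by omega)
    have h0 : G.dist x c₁ = 0 := by rw [hx]; exact SimpleGraph.dist_self
    omega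
  · exfalso
    obtain ⟨hx, -⟩ := flip_eq hT hcc.symm hxy (by omega) (by omega)
    have h0 : G.dist x c₂ = 0 := by rw [hx]; exact SimpleGraph.dist_self
    omega
  · omega

/-- Each vertex of positive depth has a unique neighbour of smaller depth. -/
lemma parent_unique {x y y' : W} (hy : G.Adj y x) (hy' : G.Adj y' x)
    (hd : dpt G c₁ c₂ y + 1 = dpt G c₁ c₂ x) (hd' : dpt G c₁ c₂ y' + 1 = dpt G c₁ c₂ x) :
    y = y' := by
  have s1 := dist_step hT c₁ hy.symm
  have s2 := dist_step hT c₂ hy.symm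
  have s1' := dist_step hT c₁ hy'.symm
  have s2' := dist_step hT c₂ hy'.symm
  have e1 : G.dist c₁ x = G.dist x c₁ := SimpleGraph.dist_comm
  have e3 : G.dist c₂ x = G.dist x c₂ := SimpleGraph.dist_comm
  have e2 : G.dist c₁ y = G.dist y c₁ := SimpleGraph.dist_comm
  have e4 : G.dist c₂ y = G.dist y c₂ := SimpleGraph.dist_comm
  have e2' : G.dist c₁ y' = G.dist y' c₁ := SimpleGraph.dist_comm
  have e4' : G.dist c₂ y' = G.dist y' c₂ := SimpleGraph.dist_comm
  have hsy := side_cases hT hcc y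
  have hsy' := side_cases hT hcc y'
  rcases side_cases hT hcc x with ⟨ha1, ha2⟩ | ⟨ha1, ha2⟩
  · exact closer_neighbor_unique hT (u := c₁) hy hy' (by omega) (by omega)
  · exact closer_neighbor_unique hT (u := c₂) hy hy' (by omega) (by omega)

/-- Descending from a vertex of locally maximal depth increases depth stepwise. -/
lemma down : ∀ (j : ℕ) (x w u : W), G.Adj x w → dpt G c₁ c₂ x = dpt G c₁ c₂ w + 1 →
    G.dist u x = j → G.dist u w = j + 1 → dpt G c₁ c₂ u = dpt G c₁ c₂ x + j := by
  intro j
  induction j with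
  | zero =>
    intro x w u _ _ h0 _
    rw [(hT.isConnected.dist_eq_zero_iff).mp h0]
    omega
  | succ j ih =>
    intro x w u hadj hdx hux huw
    have hpos : 0 < G.dist x u := by rw [SimpleGraph.dist_comm]; omega
    obtain ⟨hadjy, hspec⟩ := nextStep_spec hT hpos
    set y := nextStep hT.isConnected x u with hy
    have e1 : G.dist y u = G.dist u y := SimpleGraph.dist_comm
    have e2 : G.dist x u = G.dist u x := SimpleGraph.dist_comm
    have hdy : G.dist u y = j := by omega
    have hynw : y ≠ w := by
      rintro rfl
      omega
    rcases neighbor_depth hT hcc hadjy (by omega) with hcase | hcase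
    · have := ih y x u hadjy.symm (by omega) hdy (by omega)
      omega
    · exact absurd (parent_unique hT hcc hadjy.symm hadj.symm (by omega) (by omega)) hynw

/-- Ordered pairs at distance `2k` with midpoint `w`. -/
noncomputable def MP (G : SimpleGraph W) (k : ℕ) (w : W) : Finset (W × W) :=
  Finset.univ.filter (fun p => G.dist p.1 w = k ∧ G.dist p.2 w = k ∧ G.dist p.1 p.2 = 2 * k)

include hcov hdeg in
lemma MP_card_of_le {k : ℕ} (hk1 : 1 ≤ k) {w : W} (hwk : dpt G c₁ c₂ w + k ≤ h) :
    (MP G k w).card = (m + 1) * m ^ (2 * k - 1) := by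
  classical
  have hdegw : G.degree w = m + 1 := hdeg w (by omega)
  set T := (G.neighborFinset w).offDiag with hTdef
  have hmaps : ∀ p ∈ MP G k w,
      (nextStep hT.isConnected w p.1, nextStep hT.isConnected w p.2) ∈ T := by
    rintro ⟨u, v⟩ hp
    simp only [MP, Finset.mem_filter, Finset.mem_univ, true_and] at hp
    obtain ⟨h1, h2, h3⟩ := hp
    have hpos1 : 0 < G.dist w u := by rw [SimpleGraph.dist_comm]; omega
    have hpos2 : 0 < G.dist w v := by rw [SimpleGraph.dist_comm]; omega
    obtain ⟨ha1, hs1⟩ := nextStep_spec hT hpos1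
    obtain ⟨ha2, hs2⟩ := nextStep_spec hT hpos2
    rw [Finset.mem_offDiag]
    refine ⟨by rwa [SimpleGraph.mem_neighborFinset], by rwa [SimpleGraph.mem_neighborFinset], ?_⟩
    intro heq'
    have heq : nextStep hT.isConnected w u = nextStep hT.isConnected w v := heq'
    have e1 : G.dist w u = G.dist u w := SimpleGraph.dist_comm
    have e2 : G.dist w v = G.dist v w := SimpleGraph.dist_comm
    have tri : G.dist u v ≤ G.dist u (nextStep hT.isConnected w u) +
        G.dist (nextStep hT.isConnected w u) v := hT.isConnected.dist_triangle
    have e3 : G.dist u (nextStep hT.isConnected w u) =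
        G.dist (nextStep hT.isConnected w u) u := SimpleGraph.dist_comm
    rw [← heq] at hs2
    omega
  have hcard := Finset.card_eq_sum_card_fiberwise hmaps
  have hfib : ∀ z ∈ T, ((MP G k w).filter (fun p =>
      (nextStep hT.isConnected w p.1, nextStep hT.isConnected w p.2) = z))
        = (Dset G (k-1) z.1 w) ×ˢ (Dset G (k-1) z.2 w) := by
    rintro ⟨y, y'⟩ hz
    simp only [hTdef, Finset.mem_offDiag, SimpleGraph.mem_neighborFinset] at hz
    obtain ⟨hy, hy', hyne⟩ := hz
    ext ⟨u, v⟩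
    dsimp only
    simp only [MP, Finset.mem_filter, Finset.mem_univ, true_and, Finset.mem_product,
      Dset, Prod.mk.injEq]
    constructor
    · rintro ⟨⟨h1, h2, h3⟩, hfu, hfv⟩
      have hpos1 : 0 < G.dist w u := by rw [SimpleGraph.dist_comm]; omega
      have hpos2 : 0 < G.dist w v := by rw [SimpleGraph.dist_comm]; omega
      obtain ⟨-, hs1⟩ := nextStep_spec hT hpos1
      obtain ⟨-, hs2⟩ := nextStep_spec hT hpos2
      rw [hfu] at hs1
      rw [hfv] at hs2
      have e1 : G.dist w u = G.dist u w := SimpleGraph.dist_comm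
      have e2 : G.dist w v = G.dist v w := SimpleGraph.dist_comm
      have e3 : G.dist y u = G.dist u y := SimpleGraph.dist_comm
      have e4 : G.dist y' v = G.dist v y' := SimpleGraph.dist_comm
      exact ⟨⟨by omega, by omega⟩, by omega, by omega⟩
    · rintro ⟨⟨hu1, hu2⟩, hv1, hv2⟩
      have hk' : k - 1 + 1 = k := by omega
      have e3 : G.dist y u = G.dist u y := SimpleGraph.dist_comm
      have e4 : G.dist y' v = G.dist v y' := SimpleGraph.dist_comm
      have e1 : G.dist w u = G.dist u w := SimpleGraph.dist_comm
      have e2 : G.dist w v = G.dist v w := SimpleGraph.dist_comm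
      have hnsu : y = nextStep hT.isConnected w u := nextStep_eq hT hy (by omega)
      have hnsv : y' = nextStep hT.isConnected w v := nextStep_eq hT hy' (by omega)
      have hvy : G.dist v y = G.dist v w + 1 := by
        have e6 : G.dist y v = G.dist v y := SimpleGraph.dist_comm
        have e7 : G.dist w v = G.dist v w := SimpleGraph.dist_comm
        rcases dist_step hT v hy.symm with hcase | hcase
        · exfalso
          apply hyne
          rw [hnsv]
          exact nextStep_eq hT hy (by omega)
        · exact hcase
      have hdistuv : G.dist u v = 2 * k := by
        have := dist_across_edge hT (x := y) (w := w) (u := u) (v := v) hy.symm (by omega) (by omega)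
        omega
      exact ⟨⟨by omega, by omega, hdistuv⟩, hnsu.symm, hnsv.symm⟩
  rw [hcard, Finset.sum_congr rfl (fun z hz => by rw [hfib z hz])]
  have hval : ∀ z ∈ T, ((Dset G (k-1) z.1 w) ×ˢ (Dset G (k-1) z.2 w)).card
      = m ^ (k-1) * m ^ (k-1) := by
    rintro ⟨y, y'⟩ hz
    simp only [hTdef, Finset.mem_offDiag, SimpleGraph.mem_neighborFinset] at hz
    obtain ⟨hy, hy', -⟩ := hz
    rw [Finset.card_product]
    have hd1 : dpt G c₁ c₂ y ≤ dpt G c₁ c₂ w + 1 := dpt_adj_le hT hcc hT hy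
    have hd2 : dpt G c₁ c₂ y' ≤ dpt G c₁ c₂ w + 1 := dpt_adj_le hT hcc hT hy'
    rw [claimR hT hcc hcov hdeg (k-1) y w hy.symm (by omega),
      claimR hT hcc hcov hdeg (k-1) y' w hy'.symm (by omega)]
  rw [Finset.sum_congr rfl hval, Finset.sum_const]
  rw [Finset.offDiag_card]
  rw [SimpleGraph.card_neighborFinset_eq_degree, hdegw]
  have h1 : (m+1) * (m+1) - (m+1) = (m+1) * m := by
    have : (m+1)*(m+1) = (m+1)*m + (m+1) := by ring
    omega
  rw [h1]
  have h2 : 2 * k - 1 = (k - 1) + (k - 1) + 1 := by omega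
  rw [h2, pow_add, pow_add, pow_one]
  ring

include hcov hdeg in
lemma MP_empty {k : ℕ} (hk1 : 1 ≤ k) (hkh : k ≤ h) {w : W} (hwk : h < dpt G c₁ c₂ w + k) :
    MP G k w = ∅ := by
  classical
  rw [Finset.eq_empty_iff_forall_notMem]
  rintro ⟨u, v⟩ hp
  simp only [MP, Finset.mem_filter, Finset.mem_univ, true_and] at hp
  obtain ⟨h1, h2, h3⟩ := hp
  have hw1 : 1 ≤ dpt G c₁ c₂ w := by omega
  have hpos1 : 0 < G.dist w u := by rw [SimpleGraph.dist_comm]; omega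
  have hpos2 : 0 < G.dist w v := by rw [SimpleGraph.dist_comm]; omega
  obtain ⟨ha1, hs1⟩ := nextStep_spec hT hpos1
  obtain ⟨ha2, hs2⟩ := nextStep_spec hT hpos2
  set y := nextStep hT.isConnected w u with hydef
  set y' := nextStep hT.isConnected w v with hy'def
  have e1 : G.dist w u = G.dist u w := SimpleGraph.dist_comm
  have e2 : G.dist w v = G.dist v w := SimpleGraph.dist_comm
  have e3 : G.dist y u = G.dist u y := SimpleGraph.dist_comm
  have e4 : G.dist y' v = G.dist v y' := SimpleGraph.dist_comm
  have hup : ∀ z : W, G.Adj w z → ∀ a : W, G.dist a z + 1 = G.dist a w → G.dist a w = k →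
      dpt G c₁ c₂ z + 1 = dpt G c₁ c₂ w := by
    intro z hz a haz haw
    rcases neighbor_depth hT hcc hz (by omega) with hc | hc
    · exfalso
      have hdown := down hT hcc (k-1) z w a hz.symm (by omega) (by omega) (by omega)
      have := hcov a
      omega
    · exact hc
  have hdy : dpt G c₁ c₂ y + 1 = dpt G c₁ c₂ w := hup y ha1 u (by omega) (by omega)
  have hdy' : dpt G c₁ c₂ y' + 1 = dpt G c₁ c₂ w := hup y' ha2 v (by omega) (by omega)
  have hyy' : y = y' := parent_unique hT hcc ha1.symm ha2.symm hdy hdy'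
  rw [hyy'] at hs1 e3
  have tri : G.dist u v ≤ G.dist u y' + G.dist y' v := hT.isConnected.dist_triangle
  have e5 : G.dist y' v = G.dist v y' := SimpleGraph.dist_comm
  omega

include hcov hdeg in
lemma count_shallow {k : ℕ} (hkh : k ≤ h) :
    (Finset.univ.filter (fun w : W => dpt G c₁ c₂ w + k ≤ h)).card
      = ∑ i ∈ Finset.range (h - k + 1), 2 * m ^ i := by
  classical
  have hdc1 : dpt G c₁ c₂ c₁ = 0 := by
    have h0 : G.dist c₁ c₁ = 0 := SimpleGraph.dist_self
    unfold dpt; omega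
  have hdc2 : dpt G c₁ c₂ c₂ = 0 := by
    have h0 : G.dist c₂ c₂ = 0 := SimpleGraph.dist_self
    unfold dpt; omega
  have hmaps : ∀ w ∈ Finset.univ.filter (fun w : W => dpt G c₁ c₂ w + k ≤ h),
      dpt G c₁ c₂ w ∈ Finset.range (h - k + 1) := by
    intro w hw
    simp only [Finset.mem_filter, Finset.mem_univ, true_and] at hw
    rw [Finset.mem_range]
    omega
  rw [Finset.card_eq_sum_card_fiberwise hmaps]
  refine Finset.sum_congr rfl ?_
  intro i hi
  rw [Finset.mem_range] at hi
  have hset : ((Finset.univ.filter (fun w : W => dpt G c₁ c₂ w + k ≤ h)).filter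
      (fun w => dpt G c₁ c₂ w = i)) = (Dset G i c₁ c₂) ∪ (Dset G i c₂ c₁) := by
    ext w
    simp only [Finset.mem_filter, Finset.mem_univ, true_and, Finset.mem_union, Dset]
    constructor
    · rintro ⟨-, hd⟩
      rcases side_cases hT hcc w with ⟨h1, h2⟩ | ⟨h1, h2⟩
      · left; omega
      · right; omega
    · rintro (⟨h1, h2⟩ | ⟨h1, h2⟩) <;>
      · have : dpt G c₁ c₂ w = i := by unfold dpt; omega
        omega
  rw [hset, Finset.card_union_of_disjoint, claimR hT hcc hcov hdeg i c₁ c₂ hcc (by omega),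
    claimR hT hcc hcov hdeg i c₂ c₁ hcc.symm (by omega)]
  · ring
  · rw [Finset.disjoint_left]
    intro w hw1 hw2
    simp only [Dset, Finset.mem_filter, Finset.mem_univ, true_and] at hw1 hw2
    omega

include hcov hdeg in
lemma pairset_card {k : ℕ} (hk1 : 1 ≤ k) (hkh : k ≤ h) :
    (Finset.univ.filter (fun p : W × W => G.dist p.1 p.2 = 2 * k)).card
      = (m + 1) * m ^ (2 * k - 1) *
        (Finset.univ.filter (fun w : W => dpt G c₁ c₂ w + k ≤ h)).card := by
  classical
  set PS := Finset.univ.filter (fun p : W × W => G.dist p.1 p.2 = 2 * k) with hPS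
  set f : W × W → W :=
    fun p => ((hT.isConnected.exists_walk_length_eq_dist p.1 p.2).choose).getVert k with hf
  have hmaps : ∀ p ∈ PS, f p ∈ (Finset.univ : Finset W) := fun _ _ => Finset.mem_univ _
  rw [Finset.card_eq_sum_card_fiberwise hmaps]
  have hfprop : ∀ u v : W, G.dist u v = 2 * k →
      G.dist u (f (u, v)) = k ∧ G.dist (f (u, v)) v = k := by
    intro u v hd
    set p := (hT.isConnected.exists_walk_length_eq_dist u v).choose with hpdef
    have hlen : p.length = G.dist u v := (hT.isConnected.exists_walk_length_eq_dist u v).choose_spec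
    have hgv := dist_getVert hT.isConnected p hlen (i := k) (by omega)
    refine ⟨?_, ?_⟩
    · show G.dist u (p.getVert k) = k
      exact hgv.1
    · show G.dist (p.getVert k) v = k
      rw [hgv.2]; omega
  have hfib : ∀ w : W, PS.filter (fun p => f p = w) = MP G k w := by
    intro w
    ext ⟨u, v⟩
    simp only [hPS, MP, Finset.mem_filter, Finset.mem_univ, true_and]
    constructor
    · rintro ⟨hd, hfw⟩
      obtain ⟨hm1, hm2⟩ := hfprop u v hd
      rw [show f (u, v) = w from hfw] at hm1 hm2
      have e1 : G.dist w v = G.dist v w := SimpleGraph.dist_comm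
      have e2 : G.dist u w = G.dist w u := SimpleGraph.dist_comm
      exact ⟨by omega, by omega, hd⟩
    · rintro ⟨h1, h2, h3⟩
      refine ⟨h3, ?_⟩
      obtain ⟨hm1, hm2⟩ := hfprop u v h3
      obtain ⟨mid, -, huniq⟩ := midpoint_exists_unique hT h3
      have hfmid : f (u, v) = mid := huniq _ ⟨hm1, hm2⟩
      have hwmid : w = mid := huniq _ ⟨h1, by rw [SimpleGraph.dist_comm]; exact h2⟩
      rw [hfmid, hwmid]
  rw [Finset.sum_congr rfl (fun w _ => by rw [hfib w])]
  rw [← Finset.sum_filter_add_sum_filter_not Finset.univ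
    (fun w : W => dpt G c₁ c₂ w + k ≤ h) (fun w => (MP G k w).card)]
  have hz : ∀ w ∈ Finset.univ.filter (fun w : W => ¬ (dpt G c₁ c₂ w + k ≤ h)),
      (MP G k w).card = 0 := by
    intro w hw
    simp only [Finset.mem_filter, Finset.mem_univ, true_and, not_le] at hw
    rw [MP_empty hT hcc hcov hdeg hk1 hkh (by omega)]
    simp
  rw [Finset.sum_congr rfl hz, Finset.sum_const_nat (fun _ _ => rfl)]
  have hval : ∀ w ∈ Finset.univ.filter (fun w : W => dpt G c₁ c₂ w + k ≤ h),
      (MP G k w).card = (m + 1) * m ^ (2 * k - 1) := by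
    intro w hw
    simp only [Finset.mem_filter, Finset.mem_univ, true_and] at hw
    exact MP_card_of_le hT hcc hcov hdeg hk1 hw
  rw [Finset.sum_congr rfl hval, Finset.sum_const]
  ring

end Centered

section Sym2Half

variable {W : Type} [Fintype W] [DecidableEq W] {G : SimpleGraph W}

lemma pair_double {t : ℕ} (ht : 1 ≤ t) (S : Finset (Sym2 W))
    (hS : ∀ z : Sym2 W, z ∈ S ↔ ∃ u v : W, z = s(u, v) ∧ G.dist u v = t) :
    (Finset.univ.filter (fun p : W × W => G.dist p.1 p.2 = t)).card = 2 * S.card := by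
  classical
  have hmaps : ∀ p ∈ Finset.univ.filter (fun p : W × W => G.dist p.1 p.2 = t),
      s(p.1, p.2) ∈ S := by
    rintro ⟨u, v⟩ hp
    simp only [Finset.mem_filter, Finset.mem_univ, true_and] at hp
    exact (hS _).mpr ⟨u, v, rfl, hp⟩
  rw [Finset.card_eq_sum_card_fiberwise hmaps]
  have hfib : ∀ z ∈ S,
      ((Finset.univ.filter (fun p : W × W => G.dist p.1 p.2 = t)).filter
        (fun p => s(p.1, p.2) = z)).card = 2 := by
    intro z hz
    obtain ⟨a, b, rfl, hab⟩ := (hS z).mp hz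
    have hne : a ≠ b := by
      rintro rfl
      have : G.dist a a = 0 := SimpleGraph.dist_self
      omega
    have hset : ((Finset.univ.filter (fun p : W × W => G.dist p.1 p.2 = t)).filter
        (fun p => s(p.1, p.2) = s(a, b))) = {(a, b), (b, a)} := by
      ext ⟨u, v⟩
      simp only [Finset.mem_filter, Finset.mem_univ, true_and, Finset.mem_insert,
        Finset.mem_singleton, Prod.mk.injEq, Sym2.eq_iff]
      constructor
      · rintro ⟨-, (⟨rfl, rfl⟩ | ⟨rfl, rfl⟩)⟩
        · left; exact ⟨rfl, rfl⟩
        · right; exact ⟨rfl, rfl⟩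
      · rintro (⟨rfl, rfl⟩ | ⟨rfl, rfl⟩)
        · exact ⟨hab, Or.inl ⟨rfl, rfl⟩⟩
        · refine ⟨?_, Or.inr ⟨rfl, rfl⟩⟩
          rw [SimpleGraph.dist_comm]
          exact hab
    rw [hset]
    rw [Finset.card_insert_of_notMem, Finset.card_singleton]
    simp only [Finset.mem_singleton, Prod.mk.injEq]
    rintro ⟨rfl, -⟩
    exact hne rfl
  rw [Finset.sum_congr rfl hfib, Finset.sum_const, smul_eq_mul, mul_comm]

end Sym2Half


theorem aux_main (m k r : ℕ) (hm : 2 ≤ m)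
    (hk : 1 ≤ k) (hkr : k < r)
    {W : Type} [Fintype W] [DecidableEq W] (G : SimpleGraph W) [DecidableRel G.Adj]
    (hG : IsPerfectUnrootedMary m (2 * r - 1) G) :
    ((Finset.univ.filter fun p : Sym2 W => ∃ u v : W, p = s(u, v) ∧ G.dist u v = 2*k).card : ℚ) =
      (m : ℚ) ^ (2 * k - 1) / ((m : ℚ) - 1) *
        (((m : ℚ) + 1) * (m : ℚ) ^ (r - k) - ((m : ℚ) + 1)) := by
  classical
  obtain ⟨hT, hdeg0, hle, ⟨u₀, v₀, huv⟩, hleaf⟩ := hG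
  have hr2 : 2 ≤ r := by omega
  set p₀ := (hT.isConnected.exists_walk_length_eq_dist u₀ v₀).choose with hp₀
  have hlen : p₀.length = G.dist u₀ v₀ :=
    (hT.isConnected.exists_walk_length_eq_dist u₀ v₀).choose_spec
  have hlen' : p₀.length = 2 * r - 1 := by rw [hlen, huv]
  set c₁ := p₀.getVert (r - 1) with hc₁
  set c₂ := p₀.getVert r with hc₂
  have hcc : G.Adj c₁ c₂ := by
    have h := p₀.adj_getVert_succ (i := r - 1) (by omega)
    have he : r - 1 + 1 = r := by omega
    rwa [he] at h
  have hd1 := dist_getVert hT.isConnected p₀ hlen (i := r - 1) (by omega)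
  have hd2 := dist_getVert hT.isConnected p₀ hlen (i := r) (by omega)
  rw [← hc₁] at hd1
  rw [← hc₂] at hd2
  have dU1 : G.dist u₀ c₁ = r - 1 := hd1.1
  have dV1 : G.dist c₁ v₀ = r := by have := hd1.2; omega
  have dU2 : G.dist u₀ c₂ = r := hd2.1
  have dV2 : G.dist c₂ v₀ = r - 1 := by have := hd2.2; omega
  have hcov : ∀ w : W, dpt G c₁ c₂ w ≤ r - 1 := by
    intro w
    rcases dist_step hT w hcc with hside | hside
    · -- w nearer to c₁
      have e1 : G.dist v₀ c₁ = G.dist c₁ v₀ := SimpleGraph.dist_comm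
      have e2 : G.dist v₀ c₂ = G.dist c₂ v₀ := SimpleGraph.dist_comm
      have hx := dist_across_edge hT (x := c₁) (w := c₂) (u := w) (v := v₀) hcc
        (by omega) (by omega)
      have := hle w v₀
      unfold dpt
      omega
    · have e1 : G.dist u₀ c₁ = G.dist c₁ u₀ := SimpleGraph.dist_comm
      have e2 : G.dist u₀ c₂ = G.dist c₂ u₀ := SimpleGraph.dist_comm
      have hx := dist_across_edge hT (x := c₂) (w := c₁) (u := w) (v := u₀) hcc.symm
        (by omega) (by omega)
      have := hle w u₀
      unfold dpt
      omega
  have hdeg : ∀ x : W, dpt G c₁ c₂ x < r - 1 → G.degree x = m + 1 := by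
    intro x hx
    rcases hdeg0 (by omega) x with h1 | h1
    · exfalso
      obtain ⟨u, hu⟩ := hleaf x h1
      have hbound1 : G.dist x c₁ ≤ dpt G c₁ c₂ x + 1 := by
        rcases side_cases hT hcc x with ⟨ha, hb⟩ | ⟨ha, hb⟩ <;> omega
      have hbound2 : G.dist x c₂ ≤ dpt G c₁ c₂ x + 1 := by
        rcases side_cases hT hcc x with ⟨ha, hb⟩ | ⟨ha, hb⟩ <;> omega
      have hcovu := hcov u
      rcases side_cases hT hcc u with ⟨ha, hb⟩ | ⟨ha, hb⟩
      · have tri : G.dist u x ≤ G.dist u c₁ + G.dist c₁ x := hT.isConnected.dist_triangle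
        have e1 : G.dist c₁ x = G.dist x c₁ := SimpleGraph.dist_comm
        omega
      · have tri : G.dist u x ≤ G.dist u c₂ + G.dist c₂ x := hT.isConnected.dist_triangle
        have e1 : G.dist c₂ x = G.dist x c₂ := SimpleGraph.dist_comm
        omega
    · exact h1
  have hps := pairset_card hT hcc hcov hdeg (k := k) hk (by omega)
  have hcs := count_shallow hT hcc hcov hdeg (k := k) (by omega : k ≤ r - 1)
  have hsym := pair_double (G := G) (t := 2 * k) (by omega)
    (Finset.univ.filter fun p : Sym2 W => ∃ u v : W, p = s(u, v) ∧ G.dist u v = 2*k)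
    (fun z => by simp)
  have hr1 : r - 1 - k + 1 = r - k := by omega
  rw [hr1] at hcs
  have key : 2 * (Finset.univ.filter fun p : Sym2 W =>
      ∃ u v : W, p = s(u, v) ∧ G.dist u v = 2*k).card
      = (m + 1) * m ^ (2 * k - 1) * ∑ i ∈ Finset.range (r - k), 2 * m ^ i := by
    rw [← hsym, hps, hcs]
  have hm1 : (m : ℚ) ≠ 1 := by
    intro hcontr
    have : (m : ℚ) = ((1 : ℕ) : ℚ) := by rw [hcontr]; norm_num
    have := Nat.cast_injective this
    omega
  have hm0 : (m : ℚ) - 1 ≠ 0 := by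
    intro hcontr
    apply hm1
    linarith
  have hQ : 2 * ((Finset.univ.filter fun p : Sym2 W =>
      ∃ u v : W, p = s(u, v) ∧ G.dist u v = 2*k).card : ℚ)
      = ((m : ℚ) + 1) * (m : ℚ) ^ (2 * k - 1) *
        (2 * ∑ i ∈ Finset.range (r - k), (m : ℚ) ^ i) := by
    have hc := congrArg (fun n : ℕ => (n : ℚ)) key
    push_cast at hc
    have hsum : ∑ x ∈ Finset.range (r - k), (2:ℚ) * (m:ℚ) ^ x
        = 2 * ∑ x ∈ Finset.range (r - k), (m:ℚ) ^ x := by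
      rw [Finset.mul_sum]
    rw [hsum] at hc
    linear_combination hc
  rw [geom_sum_eq hm1] at hQ
  linear_combination hQ / 2

theorem unrooted_oddD_even_paths (m k r : ℕ) (hm : 2 ≤ m)
    (hk : 1 ≤ k) (hkr : k < r)
    {W : Type} [Fintype W] [DecidableEq W] (G : SimpleGraph W) [DecidableRel G.Adj]
    (hG : IsPerfectUnrootedMary m (2 * r - 1) G) :
    (pathCount G (2 * k) : ℚ) =
      (m : ℚ) ^ (2 * k - 1) / ((m : ℚ) - 1) *
        (((m : ℚ) + 1) * (m : ℚ) ^ (r - k) - ((m : ℚ) + 1)) := by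
  have hmain := aux_main m k r hm hk hkr G hG
  have hpc : pathCount G (2 * k) = (Finset.univ.filter fun p : Sym2 W =>
      ∃ u v : W, p = s(u, v) ∧ G.dist u v = 2 * k).card := rfl
  rw [hpc]
  exact hmain
end

section
/- Let m ≥ 2 and let k, r be integers with 1 ≤ k ≤ r. Then the number of paths of length t = 2k−1 in the perfect unrooted m-ary tree of diameter D = 2r equals (m^(2k−2)/(m−1)) · ( (m+1)·m^(r−k+1) − (m+1) ). -/
open SimpleGraph Finset
set_option linter.unusedSectionVars false

variable {W : Type}

section Tree
variable [DecidableEq W] {G : SimpleGraph W} (hT : G.IsTree)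
include hT

lemma adj_dist_ne {x y w : W} (h : G.Adj x y) : G.dist x w ≠ G.dist y w := by
  intro heq
  obtain ⟨p, hp, hpl⟩ := hT.isConnected.exists_path_of_dist x w
  obtain ⟨q, hq, hql⟩ := hT.isConnected.exists_path_of_dist y w
  have hxq : x ∉ q.support := by
    intro hx
    have h1 : G.dist x w ≤ (q.dropUntil x hx).length := SimpleGraph.dist_le _
    have h2 : G.dist y x ≤ (q.takeUntil x hx).length := SimpleGraph.dist_le _
    have h3 : (q.takeUntil x hx).length + (q.dropUntil x hx).length = q.length := by
      rw [← Walk.length_append, q.take_spec hx]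
    have h4 : G.dist y x = 1 := SimpleGraph.dist_eq_one_iff_adj.mpr h.symm
    omega
  have hp2 : (Walk.cons h q).IsPath := hq.cons hxq
  have := (hT.existsUnique_path x w).unique hp hp2
  have hlen : p.length = (Walk.cons h q).length := by rw [this]
  rw [Walk.length_cons] at hlen
  omega

lemma adj_dist_cases {x y : W} (h : G.Adj x y) (w : W) :
    G.dist y w = G.dist x w + 1 ∨ G.dist x w = G.dist y w + 1 := by
  have t1 : G.dist y w ≤ G.dist y x + G.dist x w := hT.isConnected.dist_triangle
  have t2 : G.dist x w ≤ G.dist x y + G.dist y w := hT.isConnected.dist_triangle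
  have h1 : G.dist y x = 1 := SimpleGraph.dist_eq_one_iff_adj.mpr h.symm
  have h2 : G.dist x y = 1 := SimpleGraph.dist_eq_one_iff_adj.mpr h
  have := adj_dist_ne hT h (w := w)
  omega

lemma exists_closer {x w : W} (hxw : x ≠ w) :
    ∃ y, G.Adj x y ∧ G.dist y w + 1 = G.dist x w := by
  have hd : 0 < G.dist x w := hT.isConnected.pos_dist_of_ne hxw
  obtain ⟨p, hpl⟩ := hT.isConnected.exists_walk_length_eq_dist x w
  cases p with
  | nil => exact absurd rfl hxw
  | cons h q =>
    rename_i y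
    refine ⟨y, h, ?_⟩
    have h1 : G.dist y w ≤ q.length := SimpleGraph.dist_le _
    have h2 : G.dist x w ≤ G.dist x y + G.dist y w := hT.isConnected.dist_triangle
    have h3 : G.dist x y = 1 := SimpleGraph.dist_eq_one_iff_adj.mpr h
    rw [Walk.length_cons] at hpl
    omega

lemma closer_unique {x w y₁ y₂ : W} (h1 : G.Adj x y₁) (h2 : G.Adj x y₂)
    (hd1 : G.dist y₁ w + 1 = G.dist x w) (hd2 : G.dist y₂ w + 1 = G.dist x w) : y₁ = y₂ := by
  obtain ⟨q1, hq1, hql1⟩ := hT.isConnected.exists_path_of_dist y₁ w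
  obtain ⟨q2, hq2, hql2⟩ := hT.isConnected.exists_path_of_dist y₂ w
  have hx1 : x ∉ q1.support := by
    intro hx
    have := SimpleGraph.dist_le (q1.dropUntil x hx)
    have h3 : (q1.takeUntil x hx).length + (q1.dropUntil x hx).length = q1.length := by
      rw [← Walk.length_append, q1.take_spec hx]
    omega
  have hx2 : x ∉ q2.support := by
    intro hx
    have := SimpleGraph.dist_le (q2.dropUntil x hx)
    have h3 : (q2.takeUntil x hx).length + (q2.dropUntil x hx).length = q2.length := by
      rw [← Walk.length_append, q2.take_spec hx]
    omega
  have hp1 : (Walk.cons h1 q1).IsPath := hq1.cons hx1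
  have hp2 : (Walk.cons h2 q2).IsPath := hq2.cons hx2
  have heq := (hT.existsUnique_path x w).unique hp1 hp2
  have := congrArg Walk.support heq
  rw [Walk.support_cons, Walk.support_cons, q1.support_eq_cons, q2.support_eq_cons] at this
  injection this with _ h2
  injection h2

lemma adj_dist_far {x w y z : W} (hy : G.Adj x y) (hyd : G.dist y w + 1 = G.dist x w)
    (hz : G.Adj x z) (hne : z ≠ y) : G.dist z w = G.dist x w + 1 := by
  rcases adj_dist_cases hT hz w with h | h
  · exact h
  · exact absurd (closer_unique hT hz hy (by omega) hyd) hne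

lemma walk_parity {x y : W} (p : G.Walk x y) : G.dist x y % 2 = p.length % 2 := by
  induction p with
  | nil => simp [SimpleGraph.dist_self]
  | @cons a b c h q ih =>
    rcases adj_dist_cases hT h.symm c with h2 | h2 <;>
      · rw [Walk.length_cons]
        omega

end Tree

section Parent
variable [Fintype W] [DecidableEq W]

/-- the unique neighbor of a degree-one vertex (junk otherwise) -/
noncomputable def par (G : SimpleGraph W) [DecidableRel G.Adj] (u : W) : W :=
  if h : ∃ p, G.neighborFinset u = {p} then h.choose else u

variable {G : SimpleGraph W} [DecidableRel G.Adj]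

lemma par_spec {u : W} (hu : G.degree u = 1) : G.neighborFinset u = {par G u} := by
  have h : ∃ p, G.neighborFinset u = {p} := Finset.card_eq_one.mp hu
  rw [par, dif_pos h]
  exact h.choose_spec

lemma adj_par {u : W} (hu : G.degree u = 1) : G.Adj u (par G u) := by
  have := par_spec hu
  have : par G u ∈ G.neighborFinset u := by rw [this]; exact Finset.mem_singleton_self _
  rwa [SimpleGraph.mem_neighborFinset] at this

lemma eq_par_of_adj {u z : W} (hu : G.degree u = 1) (h : G.Adj u z) : z = par G u := by
  have : z ∈ G.neighborFinset u := by rwa [SimpleGraph.mem_neighborFinset]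
  rwa [par_spec hu, Finset.mem_singleton] at this

lemma par_ne {u : W} (hu : G.degree u = 1) : par G u ≠ u := (adj_par hu).ne'

lemma leaf_dist (hT : G.IsTree) {u x : W} (hu : G.degree u = 1) (hx : x ≠ u) :
    G.dist u x = G.dist (par G u) x + 1 := by
  obtain ⟨y, hy, hyd⟩ := exists_closer hT (Ne.symm hx)
  rw [eq_par_of_adj hu hy] at hyd
  omega

end Parent

section Structure
variable [Fintype W] [DecidableEq W] {G : SimpleGraph W} [DecidableRel G.Adj] {m d : ℕ}
variable (hm : 2 ≤ m) (hd : 3 ≤ d) (hG : IsPerfectUnrootedMary m d G)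
include hm hd hG

lemma dist_pos_ne {x y : W} (h : G.dist x y ≠ 0) : x ≠ y := by
  rintro rfl; exact h (SimpleGraph.dist_self)

lemma parent_not_leaf {u : W} (hu : G.degree u = 1) : G.degree (par G u) ≠ 1 := by
  obtain ⟨w, hw⟩ := hG.2.2.2.2 u hu
  have hwu : G.dist u w = d := by rw [SimpleGraph.dist_comm]; exact hw
  have hne : w ≠ u := dist_pos_ne hm hd hG (by omega)
  have h1 : G.dist u w = G.dist (par G u) w + 1 := leaf_dist hG.1 hu hne
  intro hp
  have hpu : par G (par G u) = u := (eq_par_of_adj hp (adj_par hu).symm).symm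
  have hnw : w ≠ par G u := by
    apply dist_pos_ne hm hd hG (m := m)
    rw [SimpleGraph.dist_comm]
    omega
  have h2 : G.dist (par G u) w = G.dist (par G (par G u)) w + 1 := leaf_dist hG.1 hp hnw
  rw [hpu] at h2
  omega

lemma max_dist_leaf {x y : W} (h : G.dist x y = d) : G.degree x = 1 := by
  have hne : x ≠ y := dist_pos_ne hm hd hG (by omega)
  rcases hG.2.1 (by omega) x with h1 | h1
  · exact h1
  · exfalso
    obtain ⟨y0, hy0, hyd⟩ := exists_closer hG.1 hne
    have hcard : 1 < (G.neighborFinset x).card := by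
      rw [← SimpleGraph.degree] at *; omega
    obtain ⟨z, hz, hzne⟩ := Finset.exists_mem_ne hcard y0
    rw [SimpleGraph.mem_neighborFinset] at hz
    have := adj_dist_far hG.1 hy0 hyd hz hzne
    have := hG.2.2.1 z y
    omega

lemma no_internal_pair_subdiam {x y : W} (hx : G.degree x ≠ 1) (hy : G.degree y ≠ 1)
    (h : G.dist x y = d - 1) : False := by
  have hne : x ≠ y := dist_pos_ne hm hd hG (by omega)
  have hdx : G.degree x = m + 1 := (hG.2.1 (by omega) x).resolve_left hx
  obtain ⟨y0, hy0, hyd⟩ := exists_closer hG.1 hne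
  have hcard : 1 < (G.neighborFinset x).card := by
    rw [← SimpleGraph.degree] at *; omega
  obtain ⟨z, hz, hzne⟩ := Finset.exists_mem_ne hcard y0
  rw [SimpleGraph.mem_neighborFinset] at hz
  have hzd : G.dist z y = d := by have := adj_dist_far hG.1 hy0 hyd hz hzne; omega
  have hzleaf : G.degree z = 1 := max_dist_leaf hm hd hG hzd
  -- symmetric on y
  have hne' : y ≠ x := Ne.symm hne
  obtain ⟨t0, ht0, htd⟩ := exists_closer hG.1 hne'
  have hdy : G.degree y = m + 1 := (hG.2.1 (by omega) y).resolve_left hy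
  have hcard' : 1 < (G.neighborFinset y).card := by
    rw [← SimpleGraph.degree] at *; omega
  obtain ⟨t, ht, htne⟩ := Finset.exists_mem_ne hcard' t0
  rw [SimpleGraph.mem_neighborFinset] at ht
  have hdyx : G.dist y x = d - 1 := by rwa [SimpleGraph.dist_comm]
  have htdx : G.dist t x = d := by
    have := adj_dist_far (w := x) hG.1 ht0 (by omega) ht htne; omega
  have htleaf : G.degree t = 1 := max_dist_leaf hm hd hG htdx
  have hzx : par G z = x := (eq_par_of_adj hzleaf hz.symm).symm
  have htz : t ≠ z := by
    intro h'
    subst h'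
    have : G.dist t x = 1 := SimpleGraph.dist_eq_one_iff_adj.mpr hz.symm
    omega
  have : G.dist z t = G.dist (par G z) t + 1 := leaf_dist hG.1 hzleaf htz
  rw [hzx, SimpleGraph.dist_comm (u := x) (v := t)] at this
  have := hG.2.2.1 z t
  omega

lemma penult_struct {u : W} (hu : G.degree u = 1) :
    ∃ g, G.Adj (par G u) g ∧ G.degree g ≠ 1 ∧
      ∀ z, G.Adj (par G u) z → z ≠ g → G.degree z = 1 := by
  obtain ⟨w, hw⟩ := hG.2.2.2.2 u hu
  have hwu : G.dist u w = d := by rw [SimpleGraph.dist_comm]; exact hw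
  have hne : w ≠ u := dist_pos_ne hm hd hG (by omega)
  have h1 : G.dist (par G u) w = d - 1 := by
    have := leaf_dist hG.1 hu hne; omega
  have hpw : par G u ≠ w := by
    intro h'; rw [h', SimpleGraph.dist_self] at h1; omega
  obtain ⟨g, hg, hgd⟩ := exists_closer hG.1 hpw
  refine ⟨g, hg, ?_, ?_⟩
  · intro hgl
    have hpg : par G g = par G u := (eq_par_of_adj hgl hg.symm).symm
    have hwg : w ≠ g := by
      have : g ≠ w := by
        apply dist_pos_ne hm hd hG (m := m)
        omega
      exact this.symm
    have := leaf_dist hG.1 hgl hwg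
    rw [hpg] at this
    omega
  · intro z hz hzne
    have : G.dist z w = d := by
      have := adj_dist_far hG.1 hg hgd hz hzne; omega
    exact max_dist_leaf hm hd hG this

lemma penult_count {u : W} (hu : G.degree u = 1) :
    ((G.neighborFinset (par G u)).filter (fun z => G.degree z ≠ 1)).card = 1 ∧
    ((G.neighborFinset (par G u)).filter (fun z => G.degree z = 1)).card = m := by
  obtain ⟨g, hg, hgd, hgu⟩ := penult_struct hm hd hG hu
  have hdp : G.degree (par G u) = m + 1 :=
    (hG.2.1 (by omega) _).resolve_left (parent_not_leaf hm hd hG hu)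
  have hfilt : (G.neighborFinset (par G u)).filter (fun z => G.degree z ≠ 1) = {g} := by
    ext z
    simp only [Finset.mem_filter, SimpleGraph.mem_neighborFinset, Finset.mem_singleton]
    constructor
    · rintro ⟨h1, h2⟩
      by_contra h3
      exact h2 (hgu z h1 h3)
    · rintro rfl
      exact ⟨hg, hgd⟩
  have h2 : ((G.neighborFinset (par G u)).filter (fun z => G.degree z = 1)).card
      + ((G.neighborFinset (par G u)).filter (fun z => G.degree z ≠ 1)).card
      = (G.neighborFinset (par G u)).card := Finset.card_filter_add_card_filter_not _
  rw [hfilt] at h2 ⊢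
  rw [Finset.card_singleton] at h2
  refine ⟨Finset.card_singleton _, ?_⟩
  rw [← SimpleGraph.degree] at h2
  omega

end Structure

section Induced
variable [Fintype W] [DecidableEq W] (G : SimpleGraph W) [DecidableRel G.Adj]

/-- the set of internal (non-leaf) vertices -/
def Iset : Set W := {v | G.degree v ≠ 1}

instance : DecidablePred (· ∈ Iset G) := fun v =>
  decidable_of_iff (G.degree v ≠ 1) Iff.rfl

instance : DecidableRel (G.induce (Iset G)).Adj := fun a b =>
  decidable_of_iff (G.Adj a.val b.val) Iff.rfl

variable {G}

lemma induce_adj {a b : ↥(Iset G)} : (G.induce (Iset G)).Adj a b ↔ G.Adj a.val b.val :=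
  Iff.rfl

lemma lift_walk {x y : W} (p : G.Walk x y) (hs : ∀ z ∈ p.support, G.degree z ≠ 1)
    (hx : x ∈ Iset G) (hy : y ∈ Iset G) :
    ∃ q : (G.induce (Iset G)).Walk ⟨x, hx⟩ ⟨y, hy⟩, q.length = p.length := by
  induction p with
  | nil => exact ⟨Walk.nil, rfl⟩
  | @cons a b c h q ih =>
    have hb : b ∈ Iset G := hs b (by simp)
    obtain ⟨q', hq'⟩ := ih (fun z hz => hs z (by simp [hz])) hb hy
    exact ⟨Walk.cons (_root_.induce_adj.mpr h) q', by simp [hq']⟩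

lemma proj_walk {x y : ↥(Iset G)} (q : (G.induce (Iset G)).Walk x y) :
    ∃ p : G.Walk x.val y.val, p.length = q.length := by
  refine ⟨(q.map (SimpleGraph.Embedding.induce (Iset G)).toHom).copy rfl rfl, ?_⟩
  exact Eq.trans (by apply Walk.length_copy) (by apply Walk.length_map)
end Induced

section Structure2
variable [Fintype W] [DecidableEq W] {G : SimpleGraph W} [DecidableRel G.Adj] {m d : ℕ}

lemma degree_induce (v : W) (hv : v ∈ Iset G) :
    (G.induce (Iset G)).degree ⟨v, hv⟩ = ((G.neighborFinset v).filter (fun z => G.degree z ≠ 1)).card := by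
  rw [SimpleGraph.degree]
  apply Finset.card_bij (fun a _ => a.val)
  · intro a ha
    rw [SimpleGraph.mem_neighborFinset] at ha
    simp only [Finset.mem_filter, SimpleGraph.mem_neighborFinset]
    exact ⟨ha, a.2⟩
  · intro a _ b _ h
    exact Subtype.ext h
  · intro b hb
    simp only [Finset.mem_filter, SimpleGraph.mem_neighborFinset] at hb
    exact ⟨⟨b, hb.2⟩, by rw [SimpleGraph.mem_neighborFinset]; exact hb.1, rfl⟩

variable (hm : 2 ≤ m) (hd : 3 ≤ d) (hG : IsPerfectUnrootedMary m d G)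
include hm hd hG

lemma geo_support_internal {x y : W} (hx : G.degree x ≠ 1) (hy : G.degree y ≠ 1)
    (p : G.Walk x y) (hl : p.length = G.dist x y) : ∀ z ∈ p.support, G.degree z ≠ 1 := by
  intro z hz hzl
  have h1 : G.dist x z ≤ (p.takeUntil z hz).length := SimpleGraph.dist_le _
  have h2 : G.dist z y ≤ (p.dropUntil z hz).length := SimpleGraph.dist_le _
  have h3 : (p.takeUntil z hz).length + (p.dropUntil z hz).length = p.length := by
    rw [← Walk.length_append, p.take_spec hz]
  have h4 : G.dist x y ≤ G.dist x z + G.dist z y := hG.1.isConnected.dist_triangle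
  have hzx : z ≠ x := fun h => hx (h ▸ hzl)
  have hzy : z ≠ y := fun h => hy (h ▸ hzl)
  have h5 : G.dist z x = G.dist (par G z) x + 1 := leaf_dist hG.1 hzl (Ne.symm hzx)
  have h6 : G.dist z y = G.dist (par G z) y + 1 := leaf_dist hG.1 hzl (Ne.symm hzy)
  have h7 : G.dist x y ≤ G.dist x (par G z) + G.dist (par G z) y := hG.1.isConnected.dist_triangle
  have e1 : G.dist x z = G.dist z x := SimpleGraph.dist_comm
  have e2 : G.dist x (par G z) = G.dist (par G z) x := SimpleGraph.dist_comm
  omega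

lemma dist_induce {x y : W} (hx : x ∈ Iset G) (hy : y ∈ Iset G) :
    (G.induce (Iset G)).dist ⟨x, hx⟩ ⟨y, hy⟩ = G.dist x y := by
  obtain ⟨p, hp⟩ := hG.1.isConnected.exists_walk_length_eq_dist x y
  obtain ⟨q, hq⟩ := lift_walk p (geo_support_internal hm hd hG hx hy p hp) hx hy
  apply le_antisymm
  · have := SimpleGraph.dist_le q
    omega
  · obtain ⟨rq, hrq⟩ := (Reachable.exists_walk_length_eq_dist ⟨q⟩)
    obtain ⟨p', hp'⟩ := proj_walk rq
    have h2 := SimpleGraph.dist_le p'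
    have h3 : G.dist (↑(⟨x, hx⟩ : ↥(Iset G))) (↑(⟨y, hy⟩ : ↥(Iset G))) = G.dist x y := rfl
    omega

lemma induced_isTree : (G.induce (Iset G)).IsTree := by
  have hne : Nonempty ↥(Iset G) := by
    obtain ⟨a, b, hab⟩ := hG.2.2.2.1
    have ha : G.degree a = 1 := max_dist_leaf hm hd hG hab
    exact ⟨⟨par G a, parent_not_leaf hm hd hG ha⟩⟩
  constructor
  · constructor
    · rintro ⟨x, hx⟩ ⟨y, hy⟩
      obtain ⟨p, hp⟩ := hG.1.isConnected.exists_walk_length_eq_dist x y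
      obtain ⟨q, _⟩ := lift_walk p (geo_support_internal hm hd hG hx hy p hp) hx hy
      exact ⟨q⟩
  · intro a c hc
    exact hG.1.IsAcyclic _ (hc.map (f := (SimpleGraph.Embedding.induce (Iset G)).toHom)
      Subtype.val_injective)

lemma pen_classify {v : W} (hv : v ∈ Iset G) :
    ((∃ u, G.degree u = 1 ∧ G.Adj u v) ∧ (G.induce (Iset G)).degree ⟨v, hv⟩ = 1) ∨
    ((¬ ∃ u, G.degree u = 1 ∧ G.Adj u v) ∧ (G.induce (Iset G)).degree ⟨v, hv⟩ = m + 1) := by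
  by_cases h : ∃ u, G.degree u = 1 ∧ G.Adj u v
  · left
    refine ⟨h, ?_⟩
    obtain ⟨u, hu, huv⟩ := h
    have hpv : par G u = v := (eq_par_of_adj hu huv).symm
    rw [degree_induce]
    rw [← hpv]
    exact (penult_count hm hd hG hu).1
  · right
    refine ⟨h, ?_⟩
    rw [degree_induce]
    have : (G.neighborFinset v).filter (fun z => G.degree z ≠ 1) = G.neighborFinset v := by
      apply Finset.filter_true_of_mem
      intro z hz
      rw [SimpleGraph.mem_neighborFinset] at hz
      intro hzl
      exact h ⟨z, hzl, hz.symm⟩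
    rw [this, ← SimpleGraph.degree]
    exact (hG.2.1 (by omega) v).resolve_left hv

lemma step_perfect : IsPerfectUnrootedMary m (d - 2) (G.induce (Iset G)) := by
  refine ⟨induced_isTree hm hd hG, ?_, ?_, ?_, ?_⟩
  · rintro - ⟨v, hv⟩
    rcases pen_classify hm hd hG hv with ⟨-, h⟩ | ⟨-, h⟩
    · exact Or.inl h
    · exact Or.inr h
  · rintro ⟨x, hx⟩ ⟨y, hy⟩
    rw [dist_induce hm hd hG]
    have h1 := hG.2.2.1 x y
    have h2 : G.dist x y ≠ d := fun h => hx (max_dist_leaf hm hd hG h)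
    have h3 : G.dist x y ≠ d - 1 := fun h => no_internal_pair_subdiam hm hd hG hx hy h
    omega
  · obtain ⟨a, b, hab⟩ := hG.2.2.2.1
    have ha : G.degree a = 1 := max_dist_leaf hm hd hG hab
    have hb : G.degree b = 1 := max_dist_leaf hm hd hG (SimpleGraph.dist_comm ▸ hab)
    have hba : b ≠ a := by
      intro h; rw [h, SimpleGraph.dist_self] at hab; omega
    have e1 : G.dist a b = G.dist (par G a) b + 1 := leaf_dist hG.1 ha hba
    have hpab : par G a ≠ b := by
      intro h
      rw [h, SimpleGraph.dist_self] at e1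
      omega
    have e2 : G.dist b (par G a) = G.dist (par G b) (par G a) + 1 :=
      leaf_dist hG.1 hb hpab
    have c1 : G.dist b (par G a) = G.dist (par G a) b := SimpleGraph.dist_comm
    have c2 : G.dist (par G b) (par G a) = G.dist (par G a) (par G b) := SimpleGraph.dist_comm
    refine ⟨⟨par G a, parent_not_leaf hm hd hG ha⟩, ⟨par G b, parent_not_leaf hm hd hG hb⟩, ?_⟩
    refine (dist_induce hm hd hG _ _).trans ?_
    omega
  · rintro ⟨v, hv⟩ hdeg1
    have hpen : ∃ u, G.degree u = 1 ∧ G.Adj u v := by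
      rcases pen_classify hm hd hG hv with ⟨h, -⟩ | ⟨-, h⟩
      · exact h
      · rw [h] at hdeg1; omega
    obtain ⟨u, hu, huv⟩ := hpen
    have hpv : par G u = v := (eq_par_of_adj hu huv).symm
    obtain ⟨w, hw⟩ := hG.2.2.2.2 u hu
    have hwleaf : G.degree w = 1 := max_dist_leaf hm hd hG hw
    have hwu : w ≠ u := by
      intro h; rw [h, SimpleGraph.dist_self] at hw; omega
    have e1 : G.dist w u = G.dist (par G w) u + 1 := leaf_dist hG.1 hwleaf (Ne.symm hwu)
    have e0 : G.dist u w = G.dist v w + 1 := by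
      rw [← hpv]
      exact leaf_dist hG.1 hu hwu
    have hvw : v ≠ w := by
      intro h
      exact hv (by rw [h]; exact hwleaf)
    have e2 : G.dist w v = G.dist (par G w) v + 1 := leaf_dist hG.1 hwleaf hvw
    have e3 : G.dist u w = G.dist w u := SimpleGraph.dist_comm
    have e4 : G.dist v w = G.dist w v := SimpleGraph.dist_comm
    refine ⟨⟨par G w, parent_not_leaf hm hd hG hwleaf⟩, ?_⟩
    refine (dist_induce hm hd hG _ _).trans ?_
    have e5 : G.dist (par G w) v = G.dist v (par G w) := SimpleGraph.dist_comm
    omega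
end Structure2

section Counts
variable [Fintype W] [DecidableEq W] (G : SimpleGraph W) [DecidableRel G.Adj]

noncomputable def Dc (t : ℕ) : ℕ := (univ.filter fun q : W × W => G.dist q.1 q.2 = t).card
noncomputable def Lo (s : ℕ) : ℕ :=
  (univ.filter fun q : W × W => G.degree q.1 = 1 ∧ G.dist q.1 q.2 = s).card
noncomputable def LLo (s : ℕ) : ℕ :=
  (univ.filter fun q : W × W =>
    G.degree q.1 = 1 ∧ G.degree q.2 = 1 ∧ G.dist q.1 q.2 = s).card

variable {G}

lemma dc_eq_two_mul_pathCount {t : ℕ} (ht : 1 ≤ t) : Dc G t = 2 * pathCount G t := by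
  classical
  rw [Dc, pathCount]
  rw [Finset.card_eq_sum_card_fiberwise (f := fun q : W × W => s(q.1, q.2))
    (t := Finset.univ.filter fun p : Sym2 W => ∃ u v : W, p = s(u, v) ∧ G.dist u v = t)]
  · rw [Finset.sum_congr rfl (g := fun _ => 2), Finset.sum_const, smul_eq_mul, mul_comm]
    intro p hp
    simp only [Finset.mem_filter, Finset.mem_univ, true_and] at hp
    obtain ⟨u, v, rfl, huv⟩ := hp
    have hne : u ≠ v := by
      intro h; rw [h, SimpleGraph.dist_self] at huv; omega
    have : (Finset.univ.filter fun q : W × W => G.dist q.1 q.2 = t).filter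
        (fun q => s(q.1, q.2) = s(u, v)) = {(u, v), (v, u)} := by
      ext q
      simp only [Finset.mem_filter, Finset.mem_univ, true_and, Finset.mem_insert,
        Finset.mem_singleton, Sym2.eq_iff]
      constructor
      · rintro ⟨hd, (⟨h1, h2⟩ | ⟨h1, h2⟩)⟩
        · left; rw [Prod.ext_iff]; exact ⟨h1, h2⟩
        · right; rw [Prod.ext_iff]; exact ⟨h1, h2⟩
      · rintro (rfl | rfl)
        · exact ⟨huv, Or.inl ⟨rfl, rfl⟩⟩
        · exact ⟨by rwa [SimpleGraph.dist_comm], Or.inr ⟨rfl, rfl⟩⟩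
    rw [this]
    rw [Finset.card_insert_of_notMem (by simp [Prod.ext_iff, hne]), Finset.card_singleton]
  · intro q hq
    simp only [Finset.mem_coe, Finset.mem_filter, Finset.mem_univ, true_and] at hq ⊢
    exact ⟨q.1, q.2, rfl, hq⟩
end Counts

/-! ## formula functions -/

def loF (m r s : ℕ) : ℕ := if s ≤ 2 * r then (m + 1) * m ^ (r - 1 + s / 2) else 0
def llF (m r s : ℕ) : ℕ :=
  if s ≤ 2 * r ∧ s % 2 = 0 ∧ 1 ≤ s then
    ((if s = 2 * r then m + 1 else m) - 1) * ((m + 1) * m ^ (r + s / 2 - 2)) else 0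
def dF (m r t : ℕ) : ℕ :=
  if t ≤ 2 * r then
    2 * (m + 1) * ∑ i ∈ Finset.range (r - (t + 1) / 2 + 1), m ^ (t - 1 + i) else 0

section Arith
variable {m : ℕ} (hm : 2 ≤ m)
include hm

lemma llF_odd {r s : ℕ} (hodd : s % 2 = 1) : llF m r s = 0 := by
  rw [llF, if_neg (by omega)]

lemma loF_rec {r s : ℕ} (hr : 1 ≤ r) (hs : 1 ≤ s) :
    loF m (r + 1) s = m * loF m r (s - 1) + llF m (r + 1) s := by
  obtain ⟨M, rfl⟩ : ∃ M, m = M + 2 := ⟨m - 2, by omega⟩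
  obtain ⟨R, rfl⟩ : ∃ R, r = R + 1 := ⟨r - 1, by omega⟩
  rcases Nat.even_or_odd s with ⟨j, rfl⟩ | ⟨j, rfl⟩
  · obtain ⟨J, rfl⟩ : ∃ J, j = J + 1 := ⟨j - 1, by omega⟩
    simp only [loF, llF]
    have e1 : (J + 1 + (J + 1)) / 2 = J + 1 := by omega
    have e2 : (J + 1 + (J + 1) - 1) / 2 = J := by omega
    have e3 : R + 1 + 1 - 1 + (J + 1) = R + J + 2 := by omega
    have e4 : R + 1 - 1 + J = R + J := by omega
    have e5 : R + 1 + 1 + (J + 1) - 2 = R + J + 1 := by omega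
    rw [e1, e2, e3, e4, e5]
    by_cases h1 : J ≤ R
    · rw [if_pos (by omega), if_pos (by omega), if_pos (by omega), if_neg (by omega)]
      have : M + 2 - 1 = M + 1 := by omega
      rw [this]
      ring
    · by_cases h2 : J = R + 1
      · subst h2
        rw [if_pos (by omega), if_neg (by omega), if_pos (by omega), if_pos (by omega)]
        have : M + 2 + 1 - 1 = M + 2 := by omega
        rw [this]
        ring
      · rw [if_neg (by omega), if_neg (by omega), if_neg (by omega)]
        ring
  · rw [llF_odd hm (by omega)]
    simp only [loF]
    have e1 : (2 * j + 1) / 2 = j := by omega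
    have e2 : (2 * j + 1 - 1) / 2 = j := by omega
    have e3 : R + 1 + 1 - 1 + j = R + j + 1 := by omega
    have e4 : R + 1 - 1 + j = R + j := by omega
    rw [e1, e2, e3, e4]
    by_cases h1 : 2 * j + 1 ≤ 2 * (R + 1 + 1)
    · rw [if_pos h1, if_pos (by omega)]
      ring
    · rw [if_neg h1, if_neg (by omega)]
      ring

lemma llF_rec {r s : ℕ} (hr : 1 ≤ r) (hs : 3 ≤ s) :
    llF m (r + 1) s = m ^ 2 * llF m r (s - 2) := by
  obtain ⟨M, rfl⟩ : ∃ M, m = M + 2 := ⟨m - 2, by omega⟩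
  obtain ⟨R, rfl⟩ : ∃ R, r = R + 1 := ⟨r - 1, by omega⟩
  rcases Nat.even_or_odd s with ⟨j, rfl⟩ | ⟨j, rfl⟩
  · obtain ⟨J, rfl⟩ : ∃ J, j = J + 2 := ⟨j - 2, by omega⟩
    simp only [llF]
    have e1 : (J + 2 + (J + 2)) / 2 = J + 2 := by omega
    have e2 : (J + 2 + (J + 2) - 2) / 2 = J + 1 := by omega
    have e3 : R + 1 + 1 + (J + 2) - 2 = R + J + 2 := by omega
    have e4 : R + 1 + (J + 1) - 2 = R + J := by omega
    rw [e1, e2, e3, e4]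
    by_cases h1 : J + 2 + (J + 2) ≤ 2 * (R + 1 + 1)
    · by_cases h2 : J + 2 + (J + 2) = 2 * (R + 1 + 1)
      · rw [if_pos h2, if_pos (show J + 2 + (J + 2) - 2 = 2 * (R + 1) by omega),
          if_pos (by omega), if_pos (by omega)]
        ring
      · rw [if_neg h2, if_neg (show ¬ (J + 2 + (J + 2) - 2 = 2 * (R + 1)) by omega),
          if_pos (by omega), if_pos (by omega)]
        ring
    · rw [if_neg (by omega), if_neg (by omega)]
      ring
  · simp only [llF]
    rw [if_neg (by omega), if_neg (by omega)]
    ring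

lemma llF_base2 {r : ℕ} (hr : 1 ≤ r) :
    llF m (r + 1) 2 = m * (m - 1) * loF m r 0 := by
  obtain ⟨M, rfl⟩ : ∃ M, m = M + 2 := ⟨m - 2, by omega⟩
  obtain ⟨R, rfl⟩ : ∃ R, r = R + 1 := ⟨r - 1, by omega⟩
  simp only [llF, loF]
  have e1 : R + 1 + 1 + 2 / 2 - 2 = R + 1 := by omega
  have e2 : R + 1 - 1 + 0 / 2 = R := by omega
  have e3 : M + 2 - 1 = M + 1 := by omega
  rw [e1, e2]
  split_ifs with h1 h2 h3 <;>
    first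
      | omega
      | (exfalso
         apply (by assumption : ¬(2 ≤ 2 * (R + 1 + 1) ∧ True ∧ 1 ≤ 2))
         exact ⟨by omega, trivial, by omega⟩)
      | (have e4 : 2 + M - 1 = M + 1 := by omega
         have e5 : M + 2 - 1 = M + 1 := by omega
         simp only [e4, e5]
         ring)

lemma dF_rec {r t : ℕ} (hr : 1 ≤ r) (hodd : t % 2 = 1) :
    dF m (r + 1) t = dF m r t + 2 * m * loF m r (t - 1) := by
  obtain ⟨K, rfl⟩ : ∃ K, t = 2 * K + 1 := ⟨t / 2, by omega⟩
  simp only [dF, loF]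
  have e1 : (2 * K + 1 + 1) / 2 = K + 1 := by omega
  have e2 : (2 * K + 1 - 1) / 2 = K := by omega
  have e3 : 2 * K + 1 - 1 = 2 * K := by omega
  rw [e1, e2, e3]
  by_cases h1 : K < r
  · rw [if_pos (by omega), if_pos (by omega), if_pos (by omega)]
    have e4 : r + 1 - (K + 1) + 1 = (r - (K + 1) + 1) + 1 := by omega
    rw [e4, Finset.sum_range_succ]
    have e5 : 2 * K + (r - (K + 1) + 1) = r - 1 + K + 1 := by omega
    rw [e5]
    ring
  · by_cases h2 : K = r
    · subst h2
      rw [if_pos (by omega), if_neg (by omega), if_pos (by omega)]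
      have e4 : K + 1 - (K + 1) + 1 = 1 := by omega
      rw [e4]
      have e5 : 2 * K = K - 1 + K + 1 := by omega
      simp [Finset.sum_range_succ, e5]
      ring
    · rw [if_neg (by omega), if_neg (by omega), if_neg (by omega)]
      ring
end Arith

section CountStep
variable [Fintype W] [DecidableEq W]

/-- total function from `W` to internal vertices -/
noncomputable def toI (G : SimpleGraph W) [DecidableRel G.Adj]
    (hne : Nonempty ↥(Iset G)) (x : W) : ↥(Iset G) :=
  if h : x ∈ Iset G then ⟨x, h⟩ else hne.some

variable {G : SimpleGraph W} [DecidableRel G.Adj] {m d : ℕ}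

lemma toI_eq (hne : Nonempty ↥(Iset G)) {x : W} (h : x ∈ Iset G) :
    toI G hne x = ⟨x, h⟩ := dif_pos h

variable (hm : 2 ≤ m) (hd : 3 ≤ d) (hG : IsPerfectUnrootedMary m d G)
include hm hd hG

lemma internal_nonempty : Nonempty ↥(Iset G) := by
  obtain ⟨a, b, hab⟩ := hG.2.2.2.1
  have ha : G.degree a = 1 := max_dist_leaf hm hd hG hab
  exact ⟨⟨par G a, parent_not_leaf hm hd hG ha⟩⟩

lemma kids_card {p : W} (hp : ∃ u, G.degree u = 1 ∧ G.Adj u p) :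
    ((G.neighborFinset p).filter (fun z => G.degree z = 1)).card = m := by
  obtain ⟨u, hu, hup⟩ := hp
  have hpv : par G u = p := (eq_par_of_adj hu hup).symm
  rw [← hpv]
  exact (penult_count hm hd hG hu).2

lemma pen_of_deg1' {p : ↥(Iset G)} (hp : (G.induce (Iset G)).degree p = 1) :
    ∃ u, G.degree u = 1 ∧ G.Adj u p.val := by
  rcases pen_classify hm hd hG p.2 with ⟨h, -⟩ | ⟨-, h⟩
  · convert h <;> exact (Subtype.eta _ _) ▸ rfl
  · rw [Subtype.eta] at *
    have : (G.induce (Iset G)).degree p = m + 1 := by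
      convert h
    omega

lemma deg1'_of_pen {p : ↥(Iset G)} (hp : ∃ u, G.degree u = 1 ∧ G.Adj u p.val) :
    (G.induce (Iset G)).degree p = 1 := by
  rcases pen_classify hm hd hG p.2 with ⟨-, h⟩ | ⟨h, -⟩
  · convert h
  · exact absurd (by convert hp) h

lemma dist_induce' (x y : ↥(Iset G)) :
    (G.induce (Iset G)).dist x y = G.dist x.val y.val := by
  have := dist_induce hm hd hG x.2 y.2
  convert this <;> rw [Subtype.eta]

lemma count_B {t : ℕ} (ht : 1 ≤ t) :
    ((univ.filter fun q : W × W =>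
        G.degree q.1 = 1 ∧ ¬ G.degree q.2 = 1 ∧ G.dist q.1 q.2 = t)).card
      = m * Lo (G.induce (Iset G)) (t - 1) := by
  classical
  have hne := internal_nonempty hm hd hG
  rw [Lo]
  rw [Finset.card_eq_sum_card_fiberwise
    (f := fun q : W × W => (toI G hne (par G q.1), toI G hne q.2))
    (t := univ.filter fun q' : ↥(Iset G) × ↥(Iset G) =>
        (G.induce (Iset G)).degree q'.1 = 1 ∧ (G.induce (Iset G)).dist q'.1 q'.2 = t - 1)]
  · rw [Finset.sum_congr rfl (g := fun _ => m), Finset.sum_const, smul_eq_mul, mul_comm]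
    rintro ⟨p, v⟩ hb
    simp only [Finset.mem_filter, Finset.mem_univ, true_and] at hb
    obtain ⟨hb1, hb2⟩ := hb
    have hfib : (Finset.univ.filter fun q : W × W =>
        G.degree q.1 = 1 ∧ ¬ G.degree q.2 = 1 ∧ G.dist q.1 q.2 = t).filter
        (fun q => (toI G hne (par G q.1), toI G hne q.2) = (p, v))
        = ((G.neighborFinset p.val).filter (fun z => G.degree z = 1)) ×ˢ {v.val} := by
      ext ⟨u, x⟩
      simp only [Finset.mem_filter, Finset.mem_univ, true_and, Finset.mem_product,
        Finset.mem_singleton, SimpleGraph.mem_neighborFinset, Prod.mk.injEq]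
      constructor
      · rintro ⟨⟨h1, h2, h3⟩, h4, h5⟩
        have hxI : x ∈ Iset G := h2
        rw [toI_eq hne hxI] at h5
        have hx : x = v.val := congrArg Subtype.val h5
        have hpI : par G u ∈ Iset G := parent_not_leaf hm hd hG h1
        rw [toI_eq hne hpI] at h4
        have hpu : par G u = p.val := congrArg Subtype.val h4
        refine ⟨⟨?_, h1⟩, hx⟩
        rw [← hpu]
        exact (adj_par h1).symm
      · rintro ⟨⟨hadj, hu1⟩, hx⟩
        have hpu : par G u = p.val := (eq_par_of_adj hu1 hadj.symm).symm
        have hvx : ¬ G.degree x = 1 := by rw [hx]; exact v.2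
        have hxu : x ≠ u := by
          intro h; rw [h] at hvx; exact hvx hu1
        have hdist : G.dist u x = G.dist (par G u) x + 1 := leaf_dist hG.1 hu1 hxu
        have hd2 : G.dist p.val x = t - 1 := by
          have h5 := dist_induce' hm hd hG p v
          rw [hb2] at h5
          rw [hx]
          exact h5.symm
        refine ⟨⟨hu1, hvx, by rw [hdist, hpu, hd2]; omega⟩, ?_, ?_⟩
        · rw [hpu, toI_eq hne p.2]
        · rw [hx, toI_eq hne v.2]
    rw [hfib, Finset.card_product, Finset.card_singleton,
      kids_card hm hd hG (pen_of_deg1' hm hd hG hb1), mul_one]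
  · rintro ⟨u, x⟩ hq
    simp only [Finset.mem_coe, Finset.mem_filter, Finset.mem_univ, true_and] at hq ⊢
    obtain ⟨h1, h2, h3⟩ := hq
    have hpI : par G u ∈ Iset G := parent_not_leaf hm hd hG h1
    have hxI : x ∈ Iset G := h2
    rw [toI_eq hne hpI, toI_eq hne hxI]
    constructor
    · refine deg1'_of_pen hm hd hG ⟨u, h1, ?_⟩
      exact adj_par h1
    · rw [dist_induce' hm hd hG]
      have hxu : x ≠ u := by intro h; rw [h] at h2; exact h2 h1
      have h6 := leaf_dist hG.1 h1 hxu
      have e : G.dist (↑(⟨par G u, hpI⟩ : ↥(Iset G))) (↑(⟨x, hxI⟩ : ↥(Iset G)))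
          = G.dist (par G u) x := rfl
      omega

lemma Dc_split (t : ℕ) :
    Dc G t
      = ((univ.filter fun q : W × W =>
          ¬ G.degree q.1 = 1 ∧ ¬ G.degree q.2 = 1 ∧ G.dist q.1 q.2 = t)).card
      + ((univ.filter fun q : W × W =>
          G.degree q.1 = 1 ∧ ¬ G.degree q.2 = 1 ∧ G.dist q.1 q.2 = t)).card
      + ((univ.filter fun q : W × W =>
          ¬ G.degree q.1 = 1 ∧ G.degree q.2 = 1 ∧ G.dist q.1 q.2 = t)).card
      + LLo G t := by
  classical
  rw [Dc, LLo]
  rw [Finset.card_filter, Finset.card_filter, Finset.card_filter, Finset.card_filter,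
    Finset.card_filter, ← Finset.sum_add_distrib, ← Finset.sum_add_distrib,
    ← Finset.sum_add_distrib]
  apply Finset.sum_congr rfl
  intro q _
  by_cases a : G.degree q.1 = 1 <;> by_cases b : G.degree q.2 = 1 <;>
    by_cases c : G.dist q.1 q.2 = t <;> simp [a, b, c]

lemma Lo_split (s : ℕ) :
    Lo G s
      = ((univ.filter fun q : W × W =>
          G.degree q.1 = 1 ∧ ¬ G.degree q.2 = 1 ∧ G.dist q.1 q.2 = s)).card
      + LLo G s := by
  classical
  rw [Lo, LLo]
  rw [Finset.card_filter, Finset.card_filter, Finset.card_filter, ← Finset.sum_add_distrib]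
  apply Finset.sum_congr rfl
  intro q _
  by_cases a : G.degree q.1 = 1 <;> by_cases b : G.degree q.2 = 1 <;>
    by_cases c : G.dist q.1 q.2 = s <;> simp [a, b, c]

lemma count_A (t : ℕ) :
    ((univ.filter fun q : W × W =>
        ¬ G.degree q.1 = 1 ∧ ¬ G.degree q.2 = 1 ∧ G.dist q.1 q.2 = t)).card
      = Dc (G.induce (Iset G)) t := by
  classical
  rw [Dc]
  apply Finset.card_bij (fun q hq =>
    ((⟨q.1, (Finset.mem_filter.mp hq).2.1⟩, ⟨q.2, (Finset.mem_filter.mp hq).2.2.1⟩)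
      : ↥(Iset G) × ↥(Iset G)))
  · intro q hq
    simp only [Finset.mem_filter, Finset.mem_univ, true_and] at hq ⊢
    rw [dist_induce' hm hd hG]
    exact hq.2.2
  · intro q1 h1 q2 h2 heq
    simp only [Prod.mk.injEq, Subtype.mk.injEq] at heq
    exact Prod.ext (congrArg Subtype.val heq.1) (congrArg Subtype.val heq.2)
  · intro b hb
    simp only [Finset.mem_filter, Finset.mem_univ, true_and] at hb
    refine ⟨(b.1.val, b.2.val), ?_, ?_⟩
    · simp only [Finset.mem_filter, Finset.mem_univ, true_and]
      refine ⟨b.1.2, b.2.2, ?_⟩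
      rw [← dist_induce' hm hd hG]
      exact hb
    · simp [Subtype.eta]

lemma count_C (t : ℕ) :
    ((univ.filter fun q : W × W =>
        ¬ G.degree q.1 = 1 ∧ G.degree q.2 = 1 ∧ G.dist q.1 q.2 = t)).card
      = ((univ.filter fun q : W × W =>
        G.degree q.1 = 1 ∧ ¬ G.degree q.2 = 1 ∧ G.dist q.1 q.2 = t)).card := by
  classical
  apply Finset.card_bij (fun q _ => Prod.swap q)
  · intro q hq
    simp only [Finset.mem_filter, Finset.mem_univ, true_and] at hq ⊢
    exact ⟨hq.2.1, hq.1, by rw [SimpleGraph.dist_comm]; exact hq.2.2⟩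
  · intro q1 _ q2 _ heq
    exact Prod.swap_injective heq
  · intro b hb
    simp only [Finset.mem_filter, Finset.mem_univ, true_and] at hb
    exact ⟨Prod.swap b, by
      simp only [Finset.mem_filter, Finset.mem_univ, true_and]
      exact ⟨hb.2.1, hb.1, by rw [SimpleGraph.dist_comm]; exact hb.2.2⟩, by simp⟩

lemma Lo0_rec :
    Lo G 0 = m * Lo (G.induce (Iset G)) 0 := by
  classical
  have hne := internal_nonempty hm hd hG
  have hconn' := (induced_isTree hm hd hG).isConnected
  rw [Lo, Lo]
  rw [Finset.card_eq_sum_card_fiberwise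
    (f := fun q : W × W => (toI G hne (par G q.1), toI G hne (par G q.1)))
    (t := univ.filter fun q' : ↥(Iset G) × ↥(Iset G) =>
        (G.induce (Iset G)).degree q'.1 = 1 ∧ (G.induce (Iset G)).dist q'.1 q'.2 = 0)]
  · rw [Finset.sum_congr rfl (g := fun _ => m), Finset.sum_const, smul_eq_mul, mul_comm]
    rintro ⟨p, v⟩ hb
    simp only [Finset.mem_filter, Finset.mem_univ, true_and] at hb
    obtain ⟨hb1, hb2⟩ := hb
    have hpv : p = v := hconn'.dist_eq_zero_iff.mp hb2
    subst hpv
    have hfib : (Finset.univ.filter fun q : W × W =>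
        G.degree q.1 = 1 ∧ G.dist q.1 q.2 = 0).filter
        (fun q => (toI G hne (par G q.1), toI G hne (par G q.1)) = (p, p))
        = ((G.neighborFinset p.val).filter (fun z => G.degree z = 1)).image (fun u => (u, u)) := by
      ext ⟨u, x⟩
      simp only [Finset.mem_filter, Finset.mem_univ, true_and, Finset.mem_image,
        SimpleGraph.mem_neighborFinset, Prod.mk.injEq]
      constructor
      · rintro ⟨⟨h1, h2⟩, h4, -⟩
        have hxu : x = u := (hG.1.isConnected.dist_eq_zero_iff.mp h2).symm
        have hpI : par G u ∈ Iset G := parent_not_leaf hm hd hG h1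
        rw [toI_eq hne hpI] at h4
        have hpu : par G u = p.val := congrArg Subtype.val h4
        exact ⟨u, ⟨by rw [← hpu]; exact (adj_par h1).symm, h1⟩, rfl, hxu.symm⟩
      · rintro ⟨a, ⟨hadj, ha1⟩, rfl, rfl⟩
        have hpu : par G a = p.val := (eq_par_of_adj ha1 hadj.symm).symm
        refine ⟨⟨ha1, SimpleGraph.dist_self⟩, ?_, ?_⟩ <;>
          rw [hpu, toI_eq hne p.2]
    rw [hfib, Finset.card_image_of_injective _ (fun a b h => (Prod.mk.injEq _ _ _ _ ▸ h : _ ∧ _).1),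
      kids_card hm hd hG (pen_of_deg1' hm hd hG hb1)]
  · rintro ⟨u, x⟩ hq
    simp only [Finset.mem_coe, Finset.mem_filter, Finset.mem_univ, true_and] at hq ⊢
    obtain ⟨h1, h2⟩ := hq
    have hpI : par G u ∈ Iset G := parent_not_leaf hm hd hG h1
    rw [toI_eq hne hpI]
    refine ⟨?_, SimpleGraph.dist_self⟩
    refine deg1'_of_pen hm hd hG ⟨u, h1, ?_⟩
    exact adj_par h1

lemma LLo1_eq_zero : LLo G 1 = 0 := by
  classical
  rw [LLo, Finset.card_eq_zero]
  ext ⟨u, x⟩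
  simp only [Finset.mem_filter, Finset.mem_univ, true_and, Finset.notMem_empty, iff_false]
  rintro ⟨h1, h2, h3⟩
  have hadj : G.Adj u x := SimpleGraph.dist_eq_one_iff_adj.mp h3
  have : x = par G u := eq_par_of_adj h1 hadj
  exact parent_not_leaf hm hd hG h1 (this ▸ h2)

lemma LLo2_rec : LLo G 2 = m * (m - 1) * Lo (G.induce (Iset G)) 0 := by
  classical
  have hne := internal_nonempty hm hd hG
  have hconn' := (induced_isTree hm hd hG).isConnected
  rw [LLo, Lo]
  rw [Finset.card_eq_sum_card_fiberwise
    (f := fun q : W × W => (toI G hne (par G q.1), toI G hne (par G q.1)))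
    (t := univ.filter fun q' : ↥(Iset G) × ↥(Iset G) =>
        (G.induce (Iset G)).degree q'.1 = 1 ∧ (G.induce (Iset G)).dist q'.1 q'.2 = 0)]
  · rw [Finset.sum_congr rfl (g := fun _ => m * (m - 1)), Finset.sum_const, smul_eq_mul, mul_comm]
    rintro ⟨p, v⟩ hb
    simp only [Finset.mem_filter, Finset.mem_univ, true_and] at hb
    obtain ⟨hb1, hb2⟩ := hb
    have hpv : p = v := hconn'.dist_eq_zero_iff.mp hb2
    subst hpv
    have hfib : (Finset.univ.filter fun q : W × W =>
        G.degree q.1 = 1 ∧ G.degree q.2 = 1 ∧ G.dist q.1 q.2 = 2).filter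
        (fun q => (toI G hne (par G q.1), toI G hne (par G q.1)) = (p, p))
        = ((G.neighborFinset p.val).filter (fun z => G.degree z = 1)).offDiag := by
      ext ⟨u, x⟩
      simp only [Finset.mem_filter, Finset.mem_univ, true_and, Finset.mem_offDiag,
        SimpleGraph.mem_neighborFinset, Prod.mk.injEq]
      constructor
      · rintro ⟨⟨h1, h2, h3⟩, h4, -⟩
        have hpI : par G u ∈ Iset G := parent_not_leaf hm hd hG h1
        rw [toI_eq hne hpI] at h4
        have hpu : par G u = p.val := congrArg Subtype.val h4
        have hxu : x ≠ u := by
          intro h; rw [h, SimpleGraph.dist_self] at h3; omega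
        have h5 : G.dist u x = G.dist (par G u) x + 1 := leaf_dist hG.1 h1 hxu
        have h6 : G.Adj (par G u) x := by
          rw [h3] at h5
          exact SimpleGraph.dist_eq_one_iff_adj.mp (by omega)
        refine ⟨⟨by rw [← hpu]; exact (adj_par h1).symm, h1⟩,
          ⟨by rw [← hpu]; exact h6, h2⟩, hxu.symm⟩
      · rintro ⟨⟨hadj, ha1⟩, ⟨hadjx, hx1⟩, hux⟩
        have hpu : par G u = p.val := (eq_par_of_adj ha1 hadj.symm).symm
        have hxu : x ≠ u := Ne.symm hux
        have h5 : G.dist u x = G.dist (par G u) x + 1 := leaf_dist hG.1 ha1 hxu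
        have h6 : G.dist (par G u) x = 1 := by
          rw [hpu]; exact SimpleGraph.dist_eq_one_iff_adj.mpr hadjx
        refine ⟨⟨ha1, hx1, by omega⟩, ?_, ?_⟩ <;> rw [hpu, toI_eq hne p.2]
    rw [hfib, Finset.offDiag_card, kids_card hm hd hG (pen_of_deg1' hm hd hG hb1)]
    obtain ⟨M, rfl⟩ : ∃ M, m = M + 2 := ⟨m - 2, by omega⟩
    have e1 : (M + 2) * (M + 2) = (M + 2) * (M + 1) + (M + 2) := by ring
    have e2 : M + 2 - 1 = M + 1 := by omega
    rw [e1, e2, Nat.add_sub_cancel]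
  · rintro ⟨u, x⟩ hq
    simp only [Finset.mem_coe, Finset.mem_filter, Finset.mem_univ, true_and] at hq ⊢
    obtain ⟨h1, h2, h3⟩ := hq
    have hpI : par G u ∈ Iset G := parent_not_leaf hm hd hG h1
    rw [toI_eq hne hpI]
    refine ⟨?_, SimpleGraph.dist_self⟩
    refine deg1'_of_pen hm hd hG ⟨u, h1, ?_⟩
    exact adj_par h1

lemma LLo_rec {s : ℕ} (hs : 3 ≤ s) :
    LLo G s = m ^ 2 * LLo (G.induce (Iset G)) (s - 2) := by
  classical
  have hne := internal_nonempty hm hd hG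
  rw [LLo, LLo]
  rw [Finset.card_eq_sum_card_fiberwise
    (f := fun q : W × W => (toI G hne (par G q.1), toI G hne (par G q.2)))
    (t := univ.filter fun q' : ↥(Iset G) × ↥(Iset G) =>
        (G.induce (Iset G)).degree q'.1 = 1 ∧ (G.induce (Iset G)).degree q'.2 = 1 ∧
          (G.induce (Iset G)).dist q'.1 q'.2 = s - 2)]
  · rw [Finset.sum_congr rfl (g := fun _ => m ^ 2), Finset.sum_const, smul_eq_mul, mul_comm]
    rintro ⟨p, v⟩ hb
    simp only [Finset.mem_filter, Finset.mem_univ, true_and] at hb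
    obtain ⟨hb1, hb2, hb3⟩ := hb
    have hpv : p ≠ v := by
      intro h
      rw [h, (induced_isTree hm hd hG).isConnected.dist_eq_zero_iff.mpr rfl] at hb3
      omega
    have hpvval : p.val ≠ v.val := fun h => hpv (Subtype.ext h)
    have hdpv : G.dist p.val v.val = s - 2 := by
      rw [← dist_induce' hm hd hG]; exact hb3
    have hfib : (Finset.univ.filter fun q : W × W =>
        G.degree q.1 = 1 ∧ G.degree q.2 = 1 ∧ G.dist q.1 q.2 = s).filter
        (fun q => (toI G hne (par G q.1), toI G hne (par G q.2)) = (p, v))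
        = ((G.neighborFinset p.val).filter (fun z => G.degree z = 1))
            ×ˢ ((G.neighborFinset v.val).filter (fun z => G.degree z = 1)) := by
      ext ⟨u, x⟩
      simp only [Finset.mem_filter, Finset.mem_univ, true_and, Finset.mem_product,
        SimpleGraph.mem_neighborFinset, Prod.mk.injEq]
      constructor
      · rintro ⟨⟨h1, h2, h3⟩, h4, h5⟩
        have hpI : par G u ∈ Iset G := parent_not_leaf hm hd hG h1
        have hxI : par G x ∈ Iset G := parent_not_leaf hm hd hG h2
        rw [toI_eq hne hpI] at h4
        rw [toI_eq hne hxI] at h5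
        have hpu : par G u = p.val := congrArg Subtype.val h4
        have hpx : par G x = v.val := congrArg Subtype.val h5
        exact ⟨⟨by rw [← hpu]; exact (adj_par h1).symm, h1⟩,
          ⟨by rw [← hpx]; exact (adj_par h2).symm, h2⟩⟩
      · rintro ⟨⟨hadju, hu1⟩, ⟨hadjx, hx1⟩⟩
        have hpu : par G u = p.val := (eq_par_of_adj hu1 hadju.symm).symm
        have hpx : par G x = v.val := (eq_par_of_adj hx1 hadjx.symm).symm
        have hxu : x ≠ u := by
          intro h
          rw [h] at hpx
          rw [hpu] at hpx
          exact hpvval hpx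
        have h5 : G.dist u x = G.dist (par G u) x + 1 := leaf_dist hG.1 hu1 hxu
        have hpux : par G u ≠ x := by
          intro h
          have := parent_not_leaf hm hd hG hu1
          rw [h] at this
          exact this hx1
        have h6 : G.dist x (par G u) = G.dist (par G x) (par G u) + 1 :=
          leaf_dist hG.1 hx1 hpux
        have c1 : G.dist (par G u) x = G.dist x (par G u) := SimpleGraph.dist_comm
        have c2 : G.dist (par G x) (par G u) = G.dist (par G u) (par G x) := SimpleGraph.dist_comm
        have hds : G.dist u x = s := by
          rw [hpu, hpx] at *
          omega
        refine ⟨⟨hu1, hx1, hds⟩, ?_, ?_⟩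
        · rw [hpu, toI_eq hne p.2]
        · rw [hpx, toI_eq hne v.2]
    rw [hfib, Finset.card_product, kids_card hm hd hG (pen_of_deg1' hm hd hG hb1),
      kids_card hm hd hG (pen_of_deg1' hm hd hG hb2), pow_two]
  · rintro ⟨u, x⟩ hq
    simp only [Finset.mem_coe, Finset.mem_filter, Finset.mem_univ, true_and] at hq ⊢
    obtain ⟨h1, h2, h3⟩ := hq
    have hpI : par G u ∈ Iset G := parent_not_leaf hm hd hG h1
    have hxI : par G x ∈ Iset G := parent_not_leaf hm hd hG h2
    rw [toI_eq hne hpI, toI_eq hne hxI]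
    have hxu : x ≠ u := by
      intro h; rw [h, SimpleGraph.dist_self] at h3; omega
    have h5 : G.dist u x = G.dist (par G u) x + 1 := leaf_dist hG.1 h1 hxu
    have hpux : par G u ≠ x := by
      intro h
      have := parent_not_leaf hm hd hG h1
      rw [h] at this
      exact this h2
    have h6 : G.dist x (par G u) = G.dist (par G x) (par G u) + 1 := leaf_dist hG.1 h2 hpux
    have c1 : G.dist (par G u) x = G.dist x (par G u) := SimpleGraph.dist_comm
    have c2 : G.dist (par G x) (par G u) = G.dist (par G u) (par G x) := SimpleGraph.dist_comm
    refine ⟨?_, ?_, ?_⟩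
    · exact deg1'_of_pen hm hd hG ⟨u, h1, adj_par h1⟩
    · exact deg1'_of_pen hm hd hG ⟨x, h2, adj_par h2⟩
    · rw [dist_induce' hm hd hG]
      have e : G.dist (↑(⟨par G u, hpI⟩ : ↥(Iset G))) (↑(⟨par G x, hxI⟩ : ↥(Iset G)))
          = G.dist (par G u) (par G x) := rfl
      omega

end CountStep

section Base
variable [Fintype W] [DecidableEq W] {G : SimpleGraph W} [DecidableRel G.Adj] {m : ℕ}
variable (hm : 2 ≤ m) (hG : IsPerfectUnrootedMary m 2 G)
include hm hG

lemma star_center : ∃ c : W, G.degree c = m + 1 ∧ ∀ w, w ≠ c → G.Adj c w ∧ G.degree w = 1 := by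
  classical
  obtain ⟨u, v, huv⟩ := hG.2.2.2.1
  have hT := hG.1
  have hne : u ≠ v := by intro h; rw [h, SimpleGraph.dist_self] at huv; omega
  obtain ⟨c, hc, hcd⟩ := exists_closer hT hne
  rw [huv] at hcd
  have hadj2 : G.Adj c v := SimpleGraph.dist_eq_one_iff_adj.mp (by omega)
  have claim1 : ∀ w, w ≠ c → G.Adj c w := by
    intro w hw
    have h2 : G.dist c w ≤ 2 := hG.2.2.1 c w
    have h0 : G.dist c w ≠ 0 := by
      intro h
      exact hw (hT.isConnected.dist_eq_zero_iff.mp h).symm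
    rcases (by omega : G.dist c w = 1 ∨ G.dist c w = 2) with h | h
    · exact SimpleGraph.dist_eq_one_iff_adj.mp h
    · exfalso
      have hcw : c ≠ w := fun h' => hw h'.symm
      obtain ⟨x, hx, hxd⟩ := exists_closer hT hcw
      have hxw : G.Adj x w := SimpleGraph.dist_eq_one_iff_adj.mp (by omega)
      -- distance from u to w is odd and ≤ 2, hence 1
      have hwalk : (Walk.cons hc (Walk.cons hx (Walk.cons hxw Walk.nil))).length = 3 := rfl
      have hpar := walk_parity hT (Walk.cons hc (Walk.cons hx (Walk.cons hxw Walk.nil)))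
      rw [hwalk] at hpar
      have huw : G.dist u w = 1 := by have := hG.2.2.1 u w; omega
      have hadjuw : G.Adj u w := SimpleGraph.dist_eq_one_iff_adj.mp huw
      have hwalk2 := walk_parity hT (Walk.cons hadj2.symm (Walk.cons hx (Walk.cons hxw Walk.nil)))
      have hvw : G.dist v w = 1 := by
        have := hG.2.2.1 v w
        simp only [Walk.length_cons, Walk.length_nil] at hwalk2
        omega
      have hadjvw : G.Adj v w := SimpleGraph.dist_eq_one_iff_adj.mp hvw
      -- two distinct paths from u to v
      have hp1 : (Walk.cons hc (Walk.cons hadj2 Walk.nil) : G.Walk u v).IsPath := by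
        rw [Walk.isPath_def]
        simp [hc.ne, hadj2.ne, hne]
      have hp2 : (Walk.cons hadjuw (Walk.cons hadjvw.symm Walk.nil) : G.Walk u v).IsPath := by
        rw [Walk.isPath_def]
        simp [hadjuw.ne, hadjvw.ne', hne]
      have := (hT.existsUnique_path u v).unique hp1 hp2
      have hsup := congrArg Walk.support this
      simp only [Walk.support_cons, Walk.support_nil] at hsup
      injection hsup with _ hsup
      injection hsup with hcw2 _
      exact hw hcw2.symm
  have claim2 : ∀ w, w ≠ c → G.degree w = 1 := by
    intro w hw
    rcases hG.2.1 (by omega) w with h | h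
    · exact h
    · exfalso
      have hcard : 1 < (G.neighborFinset w).card := by
        rw [← SimpleGraph.degree]; omega
      obtain ⟨y, hy, hyne⟩ := Finset.exists_mem_ne hcard c
      rw [SimpleGraph.mem_neighborFinset] at hy
      have hadjcy : G.Adj c y := claim1 y hyne
      have hadjcw : G.Adj c w := claim1 w hw
      have hp1 : (Walk.cons hadjcy Walk.nil : G.Walk c y).IsPath := by
        rw [Walk.isPath_def]; simp [hadjcy.ne]
      have hp2 : (Walk.cons hadjcw (Walk.cons hy Walk.nil) : G.Walk c y).IsPath := by
        rw [Walk.isPath_def]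
        simp [hadjcw.ne, hy.ne, hyne.symm]
      have := (hT.existsUnique_path c y).unique hp1 hp2
      have := congrArg Walk.length this
      simp at this
  refine ⟨c, ?_, fun w hw => ⟨claim1 w hw, claim2 w hw⟩⟩
  rcases hG.2.1 (by omega) c with h | h
  · exfalso
    obtain ⟨p, hp⟩ := Finset.card_eq_one.mp h
    have h1 : u ∈ G.neighborFinset c := by
      rw [SimpleGraph.mem_neighborFinset]; exact hc.symm
    have h2 : v ∈ G.neighborFinset c := by
      rw [SimpleGraph.mem_neighborFinset]; exact hadj2
    rw [hp, Finset.mem_singleton] at h1 h2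
    exact hne (h1.trans h2.symm)
  · exact h
lemma base_counts :
    (∀ s, Lo G s = loF m 1 s) ∧ (∀ s, 1 ≤ s → LLo G s = llF m 1 s) ∧
      (∀ t, t % 2 = 1 → Dc G t = dF m 1 t) := by
  classical
  obtain ⟨c, hdc, hstar⟩ := star_center hm hG
  have hdeg : ∀ w : W, G.degree w = 1 ↔ w ≠ c := by
    intro w
    constructor
    · intro h1 h
      subst h
      omega
    · exact fun hw => (hstar w hw).2
  have hadjc : ∀ w, w ≠ c → G.Adj c w := fun w hw => (hstar w hw).1
  have huniq : ∀ w, w ≠ c → ∀ x, G.Adj w x → x = c := by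
    intro w hw x hx
    by_contra hxc
    have h1 : G.degree w = 1 := (hstar w hw).2
    obtain ⟨p, hp⟩ := Finset.card_eq_one.mp h1
    have hcm : c ∈ G.neighborFinset w := by
      rw [SimpleGraph.mem_neighborFinset]; exact (hadjc w hw).symm
    have hxm : x ∈ G.neighborFinset w := by
      rw [SimpleGraph.mem_neighborFinset]; exact hx
    rw [hp, Finset.mem_singleton] at hcm hxm
    exact hxc (hxm.trans hcm.symm)
  have hd1 : ∀ w, w ≠ c → G.dist c w = 1 :=
    fun w hw => SimpleGraph.dist_eq_one_iff_adj.mpr (hadjc w hw)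
  have hd1' : ∀ w, w ≠ c → G.dist w c = 1 :=
    fun w hw => SimpleGraph.dist_eq_one_iff_adj.mpr (hadjc w hw).symm
  have hd2 : ∀ w x, w ≠ c → x ≠ c → w ≠ x → G.dist w x = 2 := by
    intro w x hw hx hwx
    have hle : G.dist w x ≤ 2 := hG.2.2.1 w x
    have h0 : G.dist w x ≠ 0 := by
      intro h
      exact hwx (hG.1.isConnected.dist_eq_zero_iff.mp h)
    have h1 : G.dist w x ≠ 1 := by
      intro h
      exact hx (huniq w hw x (SimpleGraph.dist_eq_one_iff_adj.mp h))
    omega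
  have hErase : G.neighborFinset c = univ.erase c := by
    ext w
    rw [SimpleGraph.mem_neighborFinset, Finset.mem_erase]
    constructor
    · intro h
      exact ⟨h.ne', Finset.mem_univ w⟩
    · intro h
      exact hadjc w h.1
  have hcarde : (univ.erase c).card = m + 1 := by rw [← hErase]; exact hdc
  have hLo : ∀ s, Lo G s = loF m 1 s := by
    intro s
    match s with
    | 0 =>
      rw [Lo, loF, if_pos (by omega)]
      have hset : (univ.filter fun q : W × W => G.degree q.1 = 1 ∧ G.dist q.1 q.2 = 0)
          = (univ.erase c).image (fun w => (w, w)) := by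
        ext ⟨a, b⟩
        simp only [Finset.mem_filter, Finset.mem_univ, true_and, Finset.mem_image,
          Finset.mem_erase, Prod.mk.injEq]
        constructor
        · rintro ⟨h1, h2⟩
          have hba : b = a := (hG.1.isConnected.dist_eq_zero_iff.mp h2).symm
          exact ⟨a, ⟨(hdeg a).mp h1, trivial⟩, rfl, hba.symm⟩
        · rintro ⟨w, ⟨hw, -⟩, rfl, rfl⟩
          exact ⟨(hdeg w).mpr hw, SimpleGraph.dist_self⟩
      rw [hset, Finset.card_image_of_injective _ (fun a b h => (Prod.mk.injEq _ _ _ _ ▸ h : _ ∧ _).1),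
        hcarde]
      simp
    | 1 =>
      rw [Lo, loF, if_pos (by omega)]
      have hset : (univ.filter fun q : W × W => G.degree q.1 = 1 ∧ G.dist q.1 q.2 = 1)
          = (univ.erase c).image (fun w => (w, c)) := by
        ext ⟨a, b⟩
        simp only [Finset.mem_filter, Finset.mem_univ, true_and, Finset.mem_image,
          Finset.mem_erase, Prod.mk.injEq]
        constructor
        · rintro ⟨h1, h2⟩
          have hac : a ≠ c := (hdeg a).mp h1
          have hbc : b = c := huniq a hac b (SimpleGraph.dist_eq_one_iff_adj.mp h2)
          exact ⟨a, ⟨hac, trivial⟩, rfl, hbc.symm⟩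
        · rintro ⟨w, ⟨hw, -⟩, rfl, rfl⟩
          exact ⟨(hdeg w).mpr hw, hd1' w hw⟩
      rw [hset, Finset.card_image_of_injective _ (fun a b h => (Prod.mk.injEq _ _ _ _ ▸ h : _ ∧ _).1),
        hcarde]
      simp
    | 2 =>
      rw [Lo, loF, if_pos (by omega)]
      have hset : (univ.filter fun q : W × W => G.degree q.1 = 1 ∧ G.dist q.1 q.2 = 2)
          = (univ.erase c).offDiag := by
        ext ⟨a, b⟩
        simp only [Finset.mem_filter, Finset.mem_univ, true_and, Finset.mem_offDiag,
          Finset.mem_erase]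
        constructor
        · rintro ⟨h1, h2⟩
          have hac : a ≠ c := (hdeg a).mp h1
          have hab : a ≠ b := by
            intro h
            rw [h, SimpleGraph.dist_self] at h2
            omega
          have hbc : b ≠ c := by
            intro h
            rw [h] at h2
            rw [hd1' a hac] at h2
            omega
          exact ⟨⟨hac, trivial⟩, ⟨hbc, trivial⟩, hab⟩
        · rintro ⟨⟨hac, -⟩, ⟨hbc, -⟩, hab⟩
          exact ⟨(hdeg a).mpr hac, hd2 a b hac hbc hab⟩
      rw [hset, Finset.offDiag_card, hcarde]
      obtain ⟨M, rfl⟩ : ∃ M, m = M + 2 := ⟨m - 2, by omega⟩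
      have e1 : (M + 2 + 1) * (M + 2 + 1) = (M + 2 + 1) * (M + 2) + (M + 2 + 1) := by ring
      rw [e1, Nat.add_sub_cancel]
      have e2 : 1 - 1 + 2 / 2 = 1 := by omega
      rw [e2]
      ring
    | (s + 3) =>
      rw [Lo, loF, if_neg (by omega)]
      rw [Finset.card_eq_zero]
      ext ⟨a, b⟩
      simp only [Finset.mem_filter, Finset.mem_univ, true_and, Finset.notMem_empty, iff_false]
      rintro ⟨-, h2⟩
      have := hG.2.2.1 a b
      omega
  have hLL : ∀ s, 1 ≤ s → LLo G s = llF m 1 s := by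
    intro s hs
    match s with
    | 1 =>
      rw [llF, if_neg (by omega), LLo, Finset.card_eq_zero]
      ext ⟨a, b⟩
      simp only [Finset.mem_filter, Finset.mem_univ, true_and, Finset.notMem_empty, iff_false]
      rintro ⟨h1, h2, h3⟩
      have hac : a ≠ c := (hdeg a).mp h1
      have hbc : b = c := huniq a hac b (SimpleGraph.dist_eq_one_iff_adj.mp h3)
      exact ((hdeg b).mp h2) hbc
    | 2 =>
      rw [LLo, llF, if_pos (by omega)]
      have hset : (univ.filter fun q : W × W =>
          G.degree q.1 = 1 ∧ G.degree q.2 = 1 ∧ G.dist q.1 q.2 = 2)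
          = (univ.erase c).offDiag := by
        ext ⟨a, b⟩
        simp only [Finset.mem_filter, Finset.mem_univ, true_and, Finset.mem_offDiag,
          Finset.mem_erase]
        constructor
        · rintro ⟨h1, h2, h3⟩
          have hab : a ≠ b := by
            intro h
            rw [h, SimpleGraph.dist_self] at h3
            omega
          exact ⟨⟨(hdeg a).mp h1, trivial⟩, ⟨(hdeg b).mp h2, trivial⟩, hab⟩
        · rintro ⟨⟨hac, -⟩, ⟨hbc, -⟩, hab⟩
          exact ⟨(hdeg a).mpr hac, (hdeg b).mpr hbc, hd2 a b hac hbc hab⟩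
      rw [hset, Finset.offDiag_card, hcarde]
      rw [if_pos (by omega)]
      obtain ⟨M, rfl⟩ : ∃ M, m = M + 2 := ⟨m - 2, by omega⟩
      have e1 : (M + 2 + 1) * (M + 2 + 1) = (M + 2 + 1) * (M + 2) + (M + 2 + 1) := by ring
      rw [e1, Nat.add_sub_cancel]
      have e2 : 1 + 2 / 2 - 2 = 0 := by omega
      have e3 : M + 2 + 1 - 1 = M + 2 := by omega
      rw [e2, e3]
      ring
    | (s + 3) =>
      rw [llF, if_neg (by omega), LLo, Finset.card_eq_zero]
      ext ⟨a, b⟩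
      simp only [Finset.mem_filter, Finset.mem_univ, true_and, Finset.notMem_empty, iff_false]
      rintro ⟨-, -, h3⟩
      have := hG.2.2.1 a b
      omega
  refine ⟨hLo, hLL, ?_⟩
  intro t ht
  match t, ht with
  | 1, _ =>
    rw [Dc, dF, if_pos (by omega)]
    have hset : (univ.filter fun q : W × W => G.dist q.1 q.2 = 1)
        = ((univ.erase c).image (fun w => (w, c))) ∪ ((univ.erase c).image (fun w => (c, w))) := by
      ext ⟨a, b⟩
      simp only [Finset.mem_filter, Finset.mem_univ, true_and, Finset.mem_union,
        Finset.mem_image, Finset.mem_erase, Prod.mk.injEq]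
      constructor
      · intro h2
        have hadj : G.Adj a b := SimpleGraph.dist_eq_one_iff_adj.mp h2
        by_cases hac : a = c
        · subst hac
          exact Or.inr ⟨b, ⟨hadj.ne', trivial⟩, rfl, rfl⟩
        · have hbc : b = c := huniq a hac b hadj
          exact Or.inl ⟨a, ⟨hac, trivial⟩, rfl, hbc.symm⟩
      · rintro (⟨w, ⟨hw, -⟩, rfl, rfl⟩ | ⟨w, ⟨hw, -⟩, rfl, rfl⟩)
        · exact hd1' w hw
        · exact hd1 w hw
    rw [hset, Finset.card_union_of_disjoint, Finset.card_image_of_injective _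
        (fun a b h => (Prod.mk.injEq _ _ _ _ ▸ h : _ ∧ _).1),
      Finset.card_image_of_injective _
        (fun a b h => (Prod.mk.injEq _ _ _ _ ▸ h : _ ∧ _).2), hcarde]
    · simp [Finset.sum_range_succ]
      ring
    · rw [Finset.disjoint_left]
      rintro ⟨a, b⟩ h1 h2
      simp only [Finset.mem_image, Finset.mem_erase, Prod.mk.injEq] at h1 h2
      obtain ⟨w, ⟨hw, -⟩, rfl, rfl⟩ := h1
      obtain ⟨w', ⟨hw', -⟩, h3, -⟩ := h2
      exact hw h3.symm
  | (t + 3), ht =>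
    have hodd : (t + 3) % 2 = 1 := ht
    rw [Dc, dF, if_neg (by omega), Finset.card_eq_zero]
    ext ⟨a, b⟩
    simp only [Finset.mem_filter, Finset.mem_univ, true_and, Finset.notMem_empty, iff_false]
    intro h2
    have := hG.2.2.1 a b
    omega
  | 2, ht => exact absurd ht (by omega)

end Base

lemma loF_zero {m r : ℕ} (hm : 2 ≤ m) (hr : 1 ≤ r) :
    loF m (r + 1) 0 = m * loF m r 0 := by
  obtain ⟨R, rfl⟩ : ∃ R, r = R + 1 := ⟨r - 1, by omega⟩
  simp only [loF, if_pos (by omega : (0:ℕ) ≤ 2 * (R + 1 + 1)), if_pos (by omega : (0:ℕ) ≤ 2 * (R + 1))]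
  have e1 : R + 1 + 1 - 1 + 0 / 2 = R + 1 := by omega
  have e2 : R + 1 - 1 + 0 / 2 = R := by omega
  rw [e1, e2]
  ring

theorem master {m : ℕ} (hm : 2 ≤ m) :
    ∀ r : ℕ, 1 ≤ r → ∀ {W : Type} [Fintype W] [DecidableEq W] (G : SimpleGraph W)
      [DecidableRel G.Adj], IsPerfectUnrootedMary m (2 * r) G →
      (∀ s, Lo G s = loF m r s) ∧ (∀ s, 1 ≤ s → LLo G s = llF m r s) ∧
        (∀ t, t % 2 = 1 → Dc G t = dF m r t) := by
  intro r hr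
  induction r, hr using Nat.le_induction with
  | base =>
    intro W _ _ G _ hG
    exact base_counts hm hG
  | succ r hr IH =>
    intro W _ _ G _ hG
    have hd : 3 ≤ 2 * (r + 1) := by omega
    have hG2 := step_perfect hm hd hG
    have e : 2 * (r + 1) - 2 = 2 * r := by omega
    rw [e] at hG2
    obtain ⟨IH1, IH2, IH3⟩ := IH _ hG2
    have hLL : ∀ s, 1 ≤ s → LLo G s = llF m (r + 1) s := by
      intro s hs
      match s, hs with
      | 0, hs => exact absurd hs (by omega)
      | 1, _ => rw [LLo1_eq_zero hm hd hG, llF_odd hm (by omega)]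
      | 2, _ => rw [LLo2_rec hm hd hG, IH1 0, llF_base2 hm hr]
      | (s+3), _ =>
        rw [LLo_rec hm hd hG (by omega), IH2 (s + 3 - 2) (by omega),
          llF_rec hm hr (by omega)]
    have hLo : ∀ s, Lo G s = loF m (r + 1) s := by
      intro s
      match s with
      | 0 => rw [Lo0_rec hm hd hG, IH1 0, loF_zero hm hr]
      | (s+1) =>
        rw [Lo_split hm hd hG, count_B hm hd hG (by omega), IH1 (s + 1 - 1),
          hLL (s+1) (by omega), loF_rec hm hr (by omega)]
    refine ⟨hLo, hLL, ?_⟩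
    intro t ht
    rw [Dc_split hm hd hG, count_A hm hd hG, count_C hm hd hG, count_B hm hd hG (by omega),
      IH3 t ht, IH1 (t - 1), hLL t (by omega), llF_odd hm ht, dF_rec hm hr ht]
    ring

lemma dF_eval {m r k : ℕ} (hk : 1 ≤ k) (hkr : k ≤ r) :
    dF m r (2 * k - 1) = 2 * (m + 1) * ∑ i ∈ Finset.range (r - k + 1), m ^ (2 * k - 2 + i) := by
  rw [dF, if_pos (by omega)]
  have e1 : (2 * k - 1 + 1) / 2 = k := by omega
  have e2 : 2 * k - 1 - 1 = 2 * k - 2 := by omega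
  rw [e1, e2]

theorem final {m k r : ℕ} (hm : 2 ≤ m) (hk : 1 ≤ k) (hkr : k ≤ r)
    {W : Type} [Fintype W] [DecidableEq W] (G : SimpleGraph W) [DecidableRel G.Adj]
    (hG : IsPerfectUnrootedMary m (2 * r) G) :
    (pathCount G (2 * k - 1) : ℚ) =
      (m : ℚ) ^ (2 * k - 2) / ((m : ℚ) - 1) *
        (((m : ℚ) + 1) * (m : ℚ) ^ (r - k + 1) - ((m : ℚ) + 1)) := by
  have hr : 1 ≤ r := le_trans hk hkr
  obtain ⟨-, -, hD⟩ := master hm r hr G hG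
  have h1 : Dc G (2 * k - 1) = dF m r (2 * k - 1) := hD _ (by omega)
  rw [dc_eq_two_mul_pathCount (by omega), dF_eval hk hkr] at h1
  have h3 : 2 * (pathCount G (2 * k - 1) : ℚ)
      = 2 * ((m : ℚ) + 1) * ∑ i ∈ Finset.range (r - k + 1), (m : ℚ) ^ (2 * k - 2 + i) := by
    exact_mod_cast congrArg (fun n : ℕ => (n : ℚ)) h1
  have hm2 : (2 : ℚ) ≤ (m : ℚ) := by exact_mod_cast hm
  have hm1 : (m : ℚ) - 1 ≠ 0 := by intro h; linarith
  have hmne : (m : ℚ) ≠ 1 := by intro h; linarith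
  have hsum : ∑ i ∈ Finset.range (r - k + 1), (m : ℚ) ^ (2 * k - 2 + i)
      = (m : ℚ) ^ (2 * k - 2) * ∑ i ∈ Finset.range (r - k + 1), (m : ℚ) ^ i := by
    rw [Finset.mul_sum]
    exact Finset.sum_congr rfl fun i _ => pow_add _ _ _
  rw [hsum, geom_sum_eq hmne] at h3
  have h4 : ((m : ℚ) ^ (2 * k - 2) / ((m : ℚ) - 1) *
      (((m : ℚ) + 1) * (m : ℚ) ^ (r - k + 1) - ((m : ℚ) + 1))) * 2
      = 2 * ((m : ℚ) + 1) * ((m : ℚ) ^ (2 * k - 2) *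
        (((m : ℚ) ^ (r - k + 1) - 1) / ((m : ℚ) - 1))) := by
    field_simp
  linarith

theorem unrooted_evenD_odd_paths (m k r : ℕ) (hm : 2 ≤ m)
    (hk : 1 ≤ k) (hkr : k ≤ r)
    {W : Type} [Fintype W] [DecidableEq W] (G : SimpleGraph W) [DecidableRel G.Adj]
    (hG : IsPerfectUnrootedMary m (2 * r) G) :
    (pathCount G (2 * k - 1) : ℚ) =
      (m : ℚ) ^ (2 * k - 2) / ((m : ℚ) - 1) *
        (((m : ℚ) + 1) * (m : ℚ) ^ (r - k + 1) - ((m : ℚ) + 1)) := by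
  exact final hm hk hkr G hG
end
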